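/- arXiv:2406.05366 — 5 statements merged into one kernel-verified Lean document; each statement's English description precedes it below -/
import Mathlib

section
/- Let γ > 0 and let Γ̃ ≥ 1 satisfy 1 − γΓ̃ > 0. Fix A, A′ ∈ ℝ^{n×n}, B, B′ ∈ ℝ^{n×m}, a symmetric matrix Q ⪰ 0, a symmetric matrix R ⪰ I_m, and symmetric positive semidefinite P, P′ ∈ ℝ^{n×n}. Define P̃ = P + γP(I_n − γP)⁻¹P, K = −(BᵀP̃B + R)⁻¹BᵀP̃A, and the Riccati update F = Q + KᵀRK + (A + BK)ᵀP̃(A + BK); define P̃′, K′, F′ analogously from (A′, B′, P′). Assume ‖A‖, ‖B‖, ‖Q‖, ‖R‖, ‖P‖, ‖P̃‖, ‖K‖ ≤ Γ̃ − 1, and that ε > 0 and W ≥ 1 satisfy ‖A′ − A‖ ≤ ε, ‖B′ − B‖ ≤ ε and ‖P′ − P‖ ≤ Wε ≤ 1 (so that I_n − γP and I_n − γP′ are positive definite and all quantities are well defined). Set 𝓛 = 1/(1 − γΓ̃)² and 𝒱 = 2(𝓛 + 1)Γ̃³. Then ‖K′ − K‖ ≤ 𝒱Wε and ‖F′ − F‖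 ≤ 10𝒱²𝓛Γ̃⁴Wε. -/
set_option maxHeartbeats 1600000

open Matrix
open scoped Matrix.Norms.L2Operator RealInnerProductSpace

namespace LeqrAux

set_option linter.unusedSectionVars false

variable {k l : Type*} [Fintype k] [Fintype l] [DecidableEq k] [DecidableEq l]

lemma l2_norm_transpose (A : Matrix k l ℝ) : ‖Aᵀ‖ = ‖A‖ := by
  rw [← conjTranspose_eq_transpose_of_trivial, l2_opNorm_conjTranspose]

lemma l2norm_le_of_bound {A : Matrix k l ℝ} {c : ℝ} (hc : 0 ≤ c)
    (h : ∀ x : l → ℝ, ‖(WithLp.equiv 2 (k → ℝ)).symm (A *ᵥ x)‖ ≤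
      c * ‖(WithLp.equiv 2 (l → ℝ)).symm x‖) : ‖A‖ ≤ c := by
  rw [l2_opNorm_def]
  refine ContinuousLinearMap.opNorm_le_bound _ hc fun x => ?_
  have := h ((WithLp.equiv 2 (l → ℝ)) x)
  simpa [Matrix.toEuclideanLin_apply] using this

lemma dot_mulVec_le (M : Matrix k k ℝ) (x : k → ℝ) :
    x ⬝ᵥ (M *ᵥ x) ≤ ‖M‖ * (x ⬝ᵥ x) := by
  have h1 : x ⬝ᵥ (M *ᵥ x)
      = ⟪(WithLp.equiv 2 (k → ℝ)).symm x, (WithLp.equiv 2 (k → ℝ)).symm (M *ᵥ x)⟫ := by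
    rw [WithLp.equiv_symm_apply, EuclideanSpace.inner_toLp_toLp, star_trivial, dotProduct_comm]
  have h2 : (x ⬝ᵥ x) = ‖(WithLp.equiv 2 (k → ℝ)).symm x‖ * ‖(WithLp.equiv 2 (k → ℝ)).symm x‖ := by
    rw [← real_inner_self_eq_norm_mul_norm, WithLp.equiv_symm_apply, EuclideanSpace.inner_toLp_toLp, star_trivial]
  have h3 : ‖(WithLp.equiv 2 (k → ℝ)).symm (M *ᵥ x)‖
      ≤ ‖M‖ * ‖(WithLp.equiv 2 (k → ℝ)).symm x‖ := by
    have := M.l2_opNorm_mulVec ((WithLp.equiv 2 (k → ℝ)).symm x)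
    simpa using this
  have h4 := real_inner_le_norm ((WithLp.equiv 2 (k → ℝ)).symm x)
    ((WithLp.equiv 2 (k → ℝ)).symm (M *ᵥ x))
  rw [h1, h2]
  nlinarith [norm_nonneg ((WithLp.equiv 2 (k → ℝ)).symm x),
    norm_nonneg ((WithLp.equiv 2 (k → ℝ)).symm (M *ᵥ x))]

lemma smul_posSemidef {M : Matrix k k ℝ} (hM : M.PosSemidef) {c : ℝ} (hc : 0 ≤ c) :
    (c • M).PosSemidef := by
  refine posSemidef_iff_dotProduct_mulVec.mpr ⟨?_, fun x => ?_⟩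
  · show (c • M)ᴴ = c • M
    rw [conjTranspose_smul, hM.1.eq, star_trivial]
  · rw [smul_mulVec, dotProduct_smul, smul_eq_mul]
    exact mul_nonneg hc (hM.dotProduct_mulVec_nonneg x)

lemma smul_one_sub_posSemidef {M : Matrix k k ℝ} (hM : M.IsHermitian) {t : ℝ}
    (h : ‖M‖ ≤ t) : (t • (1 : Matrix k k ℝ) - M).PosSemidef := by
  refine posSemidef_iff_dotProduct_mulVec.mpr ⟨?_, fun x => ?_⟩
  · show _ᴴ = _
    rw [conjTranspose_sub, conjTranspose_smul, hM.eq, conjTranspose_one, star_trivial]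
  · rw [star_trivial, sub_mulVec, dotProduct_sub, smul_mulVec, one_mulVec,
      dotProduct_smul, smul_eq_mul]
    have h1 := dot_mulVec_le M x
    have h2 : (0:ℝ) ≤ x ⬝ᵥ x := by
      simpa using dotProduct_star_self_nonneg x
    nlinarith

lemma smul_one_posDef {c : ℝ} (hc : 0 < c) : (c • (1 : Matrix k k ℝ)).PosDef := by
  refine posDef_iff_dotProduct_mulVec.mpr ⟨?_, fun x hx => ?_⟩
  · show _ᴴ = _
    rw [conjTranspose_smul, conjTranspose_one, star_trivial]
  · rw [smul_mulVec, one_mulVec, dotProduct_smul, smul_eq_mul]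
    exact mul_pos hc (dotProduct_star_self_pos_iff.mpr hx)

lemma inv_bound {M : Matrix k k ℝ} {c : ℝ} (hc : 0 < c) (h : (M - c • 1).PosSemidef) :
    M.PosDef ∧ M * M⁻¹ = 1 ∧ M⁻¹ * M = 1 ∧ ‖M⁻¹‖ ≤ c⁻¹ := by
  have hpd : M.PosDef := by
    have e : M = (M - c • 1) + c • 1 := by abel
    rw [e]
    exact Matrix.PosDef.posSemidef_add h (smul_one_posDef hc)
  have hdet : IsUnit M.det := (Matrix.isUnit_iff_isUnit_det M).1 hpd.isUnit
  have hMM : M * M⁻¹ = 1 := Matrix.mul_nonsing_inv M hdet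
  have hMM' : M⁻¹ * M = 1 := Matrix.nonsing_inv_mul M hdet
  refine ⟨hpd, hMM, hMM', ?_⟩
  refine l2norm_le_of_bound (by positivity) fun y => ?_
  set x : k → ℝ := M⁻¹ *ᵥ y with hx
  have hMx : M *ᵥ x = y := by rw [hx, mulVec_mulVec, hMM, one_mulVec]
  have key : c * (x ⬝ᵥ x) ≤ x ⬝ᵥ (M *ᵥ x) := by
    have := h.dotProduct_mulVec_nonneg x
    rw [star_trivial, sub_mulVec, dotProduct_sub, smul_mulVec, one_mulVec,
      dotProduct_smul, smul_eq_mul] at this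
    linarith
  set X : EuclideanSpace ℝ k := (WithLp.equiv 2 (k → ℝ)).symm x with hX
  set Y : EuclideanSpace ℝ k := (WithLp.equiv 2 (k → ℝ)).symm y with hY
  have h1 : x ⬝ᵥ (M *ᵥ x) = ⟪X, Y⟫ := by
    rw [hX, hY, ← hMx, WithLp.equiv_symm_apply, EuclideanSpace.inner_toLp_toLp, star_trivial, dotProduct_comm]
  have h2 : (x ⬝ᵥ x) = ‖X‖ * ‖X‖ := by
    rw [← real_inner_self_eq_norm_mul_norm, hX, WithLp.equiv_symm_apply, EuclideanSpace.inner_toLp_toLp, star_trivial]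
  have h4 : ⟪X, Y⟫ ≤ ‖X‖ * ‖Y‖ := real_inner_le_norm X Y
  have hcx : c * ‖X‖ ≤ ‖Y‖ := by
    rcases eq_or_lt_of_le (norm_nonneg X) with h0 | h0
    · rw [← h0, mul_zero]; exact norm_nonneg Y
    · nlinarith [key, h1 ▸ h4, h2]
  have : ‖X‖ ≤ c⁻¹ * ‖Y‖ := by
    rw [← mul_le_mul_iff_right₀ hc, ← mul_assoc, mul_inv_cancel₀ hc.ne', one_mul]
    exact hcx
  simpa [hX, hY, hx] using this

lemma norm_mul3_le {a b d e : Type*} [Fintype a] [Fintype b] [Fintype d] [Fintype e]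
    [DecidableEq a] [DecidableEq b] [DecidableEq d] [DecidableEq e]
    (X : Matrix a b ℝ) (Y : Matrix b d ℝ) (Z : Matrix d e ℝ) {p q r : ℝ}
    (hX : ‖X‖ ≤ p) (hY : ‖Y‖ ≤ q) (hZ : ‖Z‖ ≤ r) : ‖X * Y * Z‖ ≤ p * q * r := by
  have h0p : (0:ℝ) ≤ p := le_trans (norm_nonneg _) hX
  have h0q : (0:ℝ) ≤ q := le_trans (norm_nonneg _) hY
  calc ‖X * Y * Z‖ ≤ ‖X * Y‖ * ‖Z‖ := l2_opNorm_mul _ _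
    _ ≤ (p * q) * r := by
        refine mul_le_mul ?_ hZ (norm_nonneg _) (mul_nonneg h0p h0q)
        exact le_trans (l2_opNorm_mul _ _) (mul_le_mul hX hY (norm_nonneg _) h0p)

lemma norm_mul2_le {a b d : Type*} [Fintype a] [Fintype b] [Fintype d]
    [DecidableEq a] [DecidableEq b] [DecidableEq d]
    (X : Matrix a b ℝ) (Y : Matrix b d ℝ) {p q : ℝ}
    (hX : ‖X‖ ≤ p) (hY : ‖Y‖ ≤ q) : ‖X * Y‖ ≤ p * q := by
  have h0p : (0:ℝ) ≤ p := le_trans (norm_nonneg _) hX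
  exact le_trans (l2_opNorm_mul _ _) (mul_le_mul hX hY (norm_nonneg _) h0p)

lemma norm_add3_le {E : Type*} [SeminormedAddCommGroup E] (x y z : E) :
    ‖x + y + z‖ ≤ ‖x‖ + ‖y‖ + ‖z‖ :=
  le_trans (norm_add_le _ _) (add_le_add_left (norm_add_le _ _) _)

lemma triple_diff {a b c d : Type*} [Fintype a] [Fintype b] [Fintype c] [Fintype d]
    (X X' : Matrix a b ℝ) (Y Y' : Matrix b c ℝ) (Z Z' : Matrix c d ℝ) :
    X' * Y' * Z' - X * Y * Z
      = (X' - X) * Y' * Z' + X * (Y' - Y) * Z' + X * Y * (Z' - Z) := by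
  simp only [Matrix.sub_mul, Matrix.mul_sub]
  abel

lemma triple_diff2 {a b c d : Type*} [Fintype a] [Fintype b] [Fintype c] [Fintype d]
    (X X' : Matrix a b ℝ) (Y : Matrix b c ℝ) (Z Z' : Matrix c d ℝ) :
    X' * Y * Z' - X * Y * Z = (X' - X) * Y * Z' + X * Y * (Z' - Z) := by
  simp only [Matrix.sub_mul, Matrix.mul_sub]
  abel

end LeqrAux

lemma scalar_Pt {γ Γ s δ : ℝ} (hγ : 0 < γ) (hΓ : 1 ≤ Γ) (hs1 : 1 ≤ s)
    (hu : γ * Γ * s = s - 1) (hδ0 : 0 < δ) :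
    δ + γ * (δ * s * Γ + (Γ - 1) * (s * (γ * δ) * s) * Γ + (Γ - 1) * s * δ) ≤ s * s * δ := by
  have hs0 : (0:ℝ) ≤ s := by linarith
  have hΓ0 : (0:ℝ) ≤ Γ := by linarith
  have hΓ1 : (0:ℝ) ≤ Γ - 1 := by linarith
  have h1 : γ * (Γ - 1) * s ≤ s - 1 := by nlinarith [mul_nonneg hγ.le hs0]
  have h2 : γ * Γ * s = s - 1 := hu
  nlinarith [mul_nonneg (mul_nonneg hγ.le hδ0.le) hs0, sq_nonneg (s-1),
    mul_nonneg (mul_nonneg (mul_nonneg hγ.le hγ.le) hδ0.le) (mul_nonneg (mul_nonneg hs0 hs0) (mul_nonneg hΓ0 hΓ1)),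
    mul_le_mul_of_nonneg_left h1 hδ0.le,
    mul_le_mul_of_nonneg_left h2.le hδ0.le,
    mul_nonneg hδ0.le (mul_nonneg hγ.le hs0)]

lemma scalar_H {Γ L δ ε : ℝ} (hΓ : 1 ≤ Γ) (hL : 1 ≤ L) (hε0 : 0 ≤ ε) (hεδ : ε ≤ δ)
    (hδ1 : δ ≤ 1) :
    ε * (Γ - 1 + L * δ) * Γ + (Γ - 1) * (L * δ) * Γ + (Γ - 1) * (Γ - 1) * ε
      ≤ 2 * (L + 1) * Γ ^ 2 * δ := by
  have hΓ0 : (0:ℝ) ≤ Γ := by linarith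
  have hΓ1 : (0:ℝ) ≤ Γ - 1 := by linarith
  have hδ0 : (0:ℝ) ≤ δ := le_trans hε0 hεδ
  have hL0 : (0:ℝ) ≤ L := by linarith
  nlinarith [mul_nonneg (mul_nonneg hΓ1 hΓ0) (by linarith : (0:ℝ) ≤ δ - ε),
    mul_nonneg (mul_nonneg hL0 hδ0) (mul_nonneg hΓ0 hΓ1),
    mul_nonneg (mul_nonneg hL0 (by nlinarith : (0:ℝ) ≤ δ - ε*δ)) hΓ0,
    mul_nonneg (mul_nonneg hL0 hδ0) (mul_nonneg hΓ1 hΓ1),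
    mul_nonneg hε0 hΓ1, mul_nonneg hδ0 hΓ0]

lemma mul3_le' {a b c a' b' c' : ℝ} (ha : a ≤ a') (hb : b ≤ b') (hc : c ≤ c')
    (h0a : 0 ≤ a) (h0b : 0 ≤ b) (h0c : 0 ≤ c) : a * b * c ≤ a' * b' * c' := by
  have h0a' : 0 ≤ a' := le_trans h0a ha
  have h0b' : 0 ≤ b' := le_trans h0b hb
  exact mul_le_mul (mul_le_mul ha hb h0b h0a') hc h0c (mul_nonneg h0a' h0b')

lemma scalar_final {Γ L V δ : ℝ} (hΓ : 1 ≤ Γ) (hL : 1 ≤ L) (hδ0 : 0 < δ) (hδ1 : δ ≤ 1)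
    (hV : V = 2*(L+1)*Γ^3) :
    (V*δ)*(Γ-1)*(Γ-1+V*δ) + (Γ-1)*(Γ-1)*(V*δ) + ((5/4)*V*Γ*δ)*(2*L*Γ)*((3/2)*V*Γ)
      + Γ^2*(L*δ)*((3/2)*V*Γ) + Γ^2*(Γ-1)*((5/4)*V*Γ*δ) ≤ 10*V^2*L*Γ^4*δ := by
  have hΓ0 : (0:ℝ) < Γ := by linarith
  have hΓ1 : (0:ℝ) ≤ Γ - 1 := by linarith
  have hΓ2 : (1:ℝ) ≤ Γ^2 := by nlinarith
  have hΓ3 : Γ ≤ Γ^3 := by nlinarith [mul_le_mul_of_nonneg_left hΓ2 hΓ0.le]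
  have hΓ34 : Γ^3 ≤ Γ^4 := by nlinarith [mul_le_mul_of_nonneg_left hΓ (pow_pos hΓ0 3).le]
  have hΓ24 : Γ^2 ≤ Γ^4 := by nlinarith [mul_le_mul_of_nonneg_left hΓ2 (pow_pos hΓ0 2).le]
  have hΓ14 : Γ ≤ Γ^4 := le_trans hΓ3 hΓ34
  have hV4 : 4 ≤ V := by nlinarith [mul_le_mul_of_nonneg_left hΓ2 hΓ0.le]
  have h4Γ : 4*Γ ≤ V := by nlinarith [mul_le_mul_of_nonneg_left hΓ2 hΓ0.le]
  have hV0 : (0:ℝ) < V := by linarith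
  have hVL : 4 ≤ V*L := by nlinarith
  have hVΓ : 4 ≤ V*Γ := by nlinarith
  have hX0 : (0:ℝ) ≤ V^2*L*Γ^4*δ := by positivity
  have hΓLΓ4 : Γ ≤ L*Γ^4 := by nlinarith
  have hΓ2VL : 4*(Γ^2) ≤ V*L*Γ^4 := by
    nlinarith [mul_nonneg (by linarith : (0:ℝ) ≤ V*L - 4) (pow_pos hΓ0 4).le]
  have hΓ3VΓ4 : 4*(Γ^3) ≤ V*Γ^4 := by
    nlinarith [mul_nonneg (by linarith : (0:ℝ) ≤ V*Γ - 4) (pow_pos hΓ0 3).le]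
  have ht1a : (V*δ)*(Γ-1)*(Γ-1+V*δ) ≤ (V*δ)*Γ*((5/4)*V) := by
    refine mul3_le' le_rfl (by linarith) (by nlinarith) (by positivity) hΓ1 ?_
    nlinarith [mul_nonneg (mul_nonneg hV0.le hδ0.le) hΓ1]
  have k1 : V^2*δ*Γ ≤ V^2*δ*(L*Γ^4) :=
    mul_le_mul_of_nonneg_left hΓLΓ4 (by positivity)
  have ht1 : (V*δ)*(Γ-1)*(Γ-1+V*δ) ≤ (5/4)*(V^2*L*Γ^4*δ) := by nlinarith [ht1a, k1]
  have ht2 : (Γ-1)*(Γ-1)*(V*δ) ≤ (1/4)*(V^2*L*Γ^4*δ) := by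
    have k2 : (V*δ)*(4*(Γ^2)) ≤ (V*δ)*(V*L*Γ^4) :=
      mul_le_mul_of_nonneg_left hΓ2VL (by positivity)
    nlinarith [k2, mul_nonneg (mul_nonneg hV0.le hδ0.le) (by linarith : (0:ℝ) ≤ 2*Γ-1)]
  have ht3 : ((5/4)*V*Γ*δ)*(2*L*Γ)*((3/2)*V*Γ) ≤ (15/4)*(V^2*L*Γ^4*δ) := by
    have k3 : (V^2*L*δ)*(Γ^3) ≤ (V^2*L*δ)*(Γ^4) :=
      mul_le_mul_of_nonneg_left hΓ34 (by positivity)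
    nlinarith [k3]
  have ht4 : Γ^2*(L*δ)*((3/2)*V*Γ) ≤ (3/8)*(V^2*L*Γ^4*δ) := by
    have k4 : (V*L*δ)*(4*(Γ^3)) ≤ (V*L*δ)*(V*Γ^4) :=
      mul_le_mul_of_nonneg_left hΓ3VΓ4 (by positivity)
    nlinarith [k4]
  have ht5 : Γ^2*(Γ-1)*((5/4)*V*Γ*δ) ≤ (5/16)*(V^2*L*Γ^4*δ) := by
    have k5a : Γ^2*(Γ-1)*Γ ≤ Γ^4 := by nlinarith [pow_pos hΓ0 2, mul_nonneg (pow_pos hΓ0 2).le hΓ0.le]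
    have k5 : (V*δ)*(4*(Γ^4)) ≤ (V*δ)*(V*L*Γ^4) := by
      refine mul_le_mul_of_nonneg_left ?_ (by positivity)
      nlinarith [mul_nonneg (by linarith : (0:ℝ) ≤ V*L - 4) (pow_pos hΓ0 4).le]
    nlinarith [k5, mul_le_mul_of_nonneg_left k5a (by positivity : (0:ℝ) ≤ (5/4)*V*δ)]
  linarith


lemma scalar_V4 {Γ L V : ℝ} (hΓ : 1 ≤ Γ) (hL : 1 ≤ L) (hV : V = 2*(L+1)*Γ^3) :
    4 ≤ V ∧ 4*Γ ≤ V := by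
  have hΓ0 : (0:ℝ) < Γ := by linarith
  have hΓ2 : (1:ℝ) ≤ Γ^2 := by nlinarith
  have hΓ3 : Γ ≤ Γ^3 := by nlinarith [mul_le_mul_of_nonneg_left hΓ2 hΓ0.le]
  constructor <;> nlinarith [mul_le_mul_of_nonneg_left hΓ2 hΓ0.le]

lemma scalar_Cn {Γ : ℝ} (hΓ : 1 ≤ Γ) : (Γ-1) + (Γ-1)*(Γ-1) ≤ Γ^2 := by nlinarith

lemma scalar_Cd {Γ V W ε : ℝ} (hΓ : 1 ≤ Γ) (hV4 : 4 ≤ V) (hε0 : 0 ≤ ε)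
    (hεδ : ε ≤ W * ε) (hδ1 : W * ε ≤ 1) :
    ε + (ε * (Γ - 1 + V * (W * ε)) + (Γ - 1) * (V * (W * ε))) ≤ (5/4) * V * Γ * (W * ε) := by
  have hδ0 : (0:ℝ) ≤ W * ε := le_trans hε0 hεδ
  have hV0 : (0:ℝ) < V := by linarith
  nlinarith [mul_nonneg (mul_nonneg (by linarith : (0:ℝ) ≤ Γ) hδ0) (by linarith : (0:ℝ) ≤ V - 4),
    mul_nonneg (by linarith : (0:ℝ) ≤ W * ε - ε) (by linarith : (0:ℝ) ≤ Γ),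
    mul_nonneg (mul_nonneg hV0.le hδ0) (by linarith : (0:ℝ) ≤ W * ε - ε),
    mul_nonneg (mul_nonneg hV0.le hδ0) (by linarith : (0:ℝ) ≤ 1 - W * ε)]

lemma scalar_C'n {Γ V W ε : ℝ} (hΓ : 1 ≤ Γ) (h4Γ : 4*Γ ≤ V) (hV0 : 0 < V)
    (hδ0 : 0 ≤ W * ε) (hδ1 : W * ε ≤ 1) :
    Γ^2 + (5/4) * V * Γ * (W * ε) ≤ (3/2) * V * Γ := by
  nlinarith [mul_nonneg (mul_nonneg hV0.le (by linarith : (0:ℝ) ≤ Γ)) (by linarith : (0:ℝ) ≤ 1 - W * ε)]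

lemma scalar_Pt2 {Γ L W ε : ℝ} (hΓ : 1 ≤ Γ) (hL : 1 ≤ L) (hδ0 : 0 ≤ W * ε) (hδ1 : W * ε ≤ 1) :
    Γ - 1 + L * (W * ε) ≤ 2 * L * Γ := by
  nlinarith [mul_nonneg (by linarith : (0:ℝ) ≤ L) (by linarith : (0:ℝ) ≤ 1 - W * ε)]

lemma scalar_Kd {Γ L V W ε : ℝ} (hV : V = 2*(L+1)*Γ^3) :
    1 * (2 * (L + 1) * Γ ^ 2 * (W * ε)) + 1 * (2 * (L + 1) * Γ ^ 2 * (W * ε)) * (Γ - 1)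
      = V * (W * ε) := by rw [hV]; ring

open LeqrAux

/-- One-step perturbation bound for the LEQR Riccati update
(Lemma 6 of the paper). -/
theorem leqr_riccati_one_step_perturbation {n m : ℕ} (γ Γ ε W : ℝ)
    (A A' : Matrix (Fin n) (Fin n) ℝ) (B B' : Matrix (Fin n) (Fin m) ℝ)
    (Q : Matrix (Fin n) (Fin n) ℝ) (R : Matrix (Fin m) (Fin m) ℝ)
    (P P' : Matrix (Fin n) (Fin n) ℝ)
    (hγ : 0 < γ) (hΓ : 1 ≤ Γ) (hγΓ : 0 < 1 - γ * Γ)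
    (hQ : Q.PosSemidef) (hRsymm : R.IsSymm) (hR : (R - 1).PosSemidef)
    (hP : P.PosSemidef) (hP' : P'.PosSemidef)
    -- the Riccati update for (A, B, P)
    (Ptil : Matrix (Fin n) (Fin n) ℝ)
    (hPtil : Ptil = P + γ • (P * (1 - γ • P)⁻¹ * P))
    (K : Matrix (Fin m) (Fin n) ℝ)
    (hK : K = -((Bᵀ * Ptil * B + R)⁻¹ * (Bᵀ * Ptil * A)))
    (F : Matrix (Fin n) (Fin n) ℝ)
    (hF : F = Q + Kᵀ * R * K + (A + B * K)ᵀ * Ptil * (A + B * K))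
    -- the Riccati update for (A', B', P')
    (Ptil' : Matrix (Fin n) (Fin n) ℝ)
    (hPtil' : Ptil' = P' + γ • (P' * (1 - γ • P')⁻¹ * P'))
    (K' : Matrix (Fin m) (Fin n) ℝ)
    (hK' : K' = -((B'ᵀ * Ptil' * B' + R)⁻¹ * (B'ᵀ * Ptil' * A')))
    (F' : Matrix (Fin n) (Fin n) ℝ)
    (hF' : F' = Q + K'ᵀ * R * K' + (A' + B' * K')ᵀ * Ptil' * (A' + B' * K'))
    -- norm bounds
    (hAn : ‖A‖ ≤ Γ - 1) (hBn : ‖B‖ ≤ Γ - 1) (hQn : ‖Q‖ ≤ Γ - 1) (hRn : ‖R‖ ≤ Γ - 1)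
    (hPn : ‖P‖ ≤ Γ - 1) (hPtiln : ‖Ptil‖ ≤ Γ - 1) (hKn : ‖K‖ ≤ Γ - 1)
    -- perturbation sizes
    (hε : 0 < ε) (hW : 1 ≤ W)
    (hAdiff : ‖A' - A‖ ≤ ε) (hBdiff : ‖B' - B‖ ≤ ε)
    (hPdiff : ‖P' - P‖ ≤ W * ε) (hWε : W * ε ≤ 1)
    -- constants
    (L V : ℝ) (hLdef : L = 1 / (1 - γ * Γ) ^ 2) (hVdef : V = 2 * (L + 1) * Γ ^ 3) :
    ‖K' - K‖ ≤ V * W * ε ∧ ‖F' - F‖ ≤ 10 * V ^ 2 * L * Γ ^ 4 * W * ε := by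
  -- scalar setup
  have hΓ0 : (0:ℝ) < Γ := by linarith
  have hΓ1 : (0:ℝ) ≤ Γ - 1 := by linarith
  have hW0 : (0:ℝ) < W := by linarith
  have hδ0 : (0:ℝ) < W * ε := mul_pos hW0 hε
  have hεδ : ε ≤ W * ε := by nlinarith
  have hε1 : ε ≤ 1 := le_trans hεδ hWε
  set s : ℝ := (1 - γ * Γ)⁻¹ with hsdef
  have hss : (1 - γ * Γ) * s = 1 := mul_inv_cancel₀ hγΓ.ne'
  have hs0 : (0:ℝ) < s := inv_pos.mpr hγΓ
  have hγΓ1 : γ * Γ < 1 := by linarith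
  have hs1 : (1:ℝ) ≤ s := by nlinarith [mul_pos hγ hΓ0]
  have hu : γ * Γ * s = s - 1 := by nlinarith [hss]
  have hLs : L = s * s := by
    rw [hLdef, pow_two, one_div, mul_inv, hsdef]
  have hL1 : (1:ℝ) ≤ L := by nlinarith
  obtain ⟨hV4, h4Γ⟩ := scalar_V4 hΓ hL1 hVdef
  have hV0 : (0:ℝ) < V := by linarith
  -- norms of primed data
  have hA'n : ‖A'‖ ≤ Γ := by
    have e : A' = A + (A' - A) := by abel
    calc ‖A'‖ = ‖A + (A' - A)‖ := by rw [← e]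
      _ ≤ ‖A‖ + ‖A' - A‖ := norm_add_le _ _
      _ ≤ Γ := by linarith
  have hB'n : ‖B'‖ ≤ Γ := by
    have e : B' = B + (B' - B) := by abel
    calc ‖B'‖ = ‖B + (B' - B)‖ := by rw [← e]
      _ ≤ ‖B‖ + ‖B' - B‖ := norm_add_le _ _
      _ ≤ Γ := by linarith
  have hP'n : ‖P'‖ ≤ Γ := by
    have e : P' = P + (P' - P) := by abel
    calc ‖P'‖ = ‖P + (P' - P)‖ := by rw [← e]
      _ ≤ ‖P‖ + ‖P' - P‖ := norm_add_le _ _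
      _ ≤ Γ := by linarith
  -- the resolvent matrices
  have hMsub : (1 - γ • P) - (1 - γ * Γ) • (1 : Matrix (Fin n) (Fin n) ℝ)
      = γ • (Γ • (1 : Matrix (Fin n) (Fin n) ℝ) - P) := by module
  have hMpsd : ((1 - γ • P) - (1 - γ * Γ) • (1 : Matrix (Fin n) (Fin n) ℝ)).PosSemidef := by
    rw [hMsub]
    exact smul_posSemidef (smul_one_sub_posSemidef hP.1 (by linarith)) hγ.le
  obtain ⟨hMpd, hMi1, hMi2, hMn⟩ := inv_bound hγΓ hMpsd
  rw [← hsdef] at hMn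
  have hM'sub : (1 - γ • P') - (1 - γ * Γ) • (1 : Matrix (Fin n) (Fin n) ℝ)
      = γ • (Γ • (1 : Matrix (Fin n) (Fin n) ℝ) - P') := by module
  have hM'psd : ((1 - γ • P') - (1 - γ * Γ) • (1 : Matrix (Fin n) (Fin n) ℝ)).PosSemidef := by
    rw [hM'sub]
    exact smul_posSemidef (smul_one_sub_posSemidef hP'.1 hP'n) hγ.le
  obtain ⟨hM'pd, hM'i1, hM'i2, hM'n⟩ := inv_bound hγΓ hM'psd
  rw [← hsdef] at hM'n
  -- positive semidefiniteness of Ptil, Ptil'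
  have hPMP : (P * (1 - γ • P)⁻¹ * P).PosSemidef := by
    have h := (hMpd.inv.posSemidef).conjTranspose_mul_mul_same P
    rwa [hP.1.eq] at h
  have hPtilPSD : Ptil.PosSemidef := by
    rw [hPtil]; exact hP.add (smul_posSemidef hPMP hγ.le)
  have hPMP' : (P' * (1 - γ • P')⁻¹ * P').PosSemidef := by
    have h := (hM'pd.inv.posSemidef).conjTranspose_mul_mul_same P'
    rwa [hP'.1.eq] at h
  have hPtil'PSD : Ptil'.PosSemidef := by
    rw [hPtil']; exact hP'.add (smul_posSemidef hPMP' hγ.le)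
  -- resolvent difference
  have hMdiff : (1 - γ • P')⁻¹ - (1 - γ • P)⁻¹
      = (1 - γ • P')⁻¹ * ((1 - γ • P) - (1 - γ • P')) * (1 - γ • P)⁻¹ := by
    have e : (1 - γ • P')⁻¹ * ((1 - γ • P) - (1 - γ • P')) * (1 - γ • P)⁻¹
        = (1 - γ • P')⁻¹ * ((1 - γ • P) * (1 - γ • P)⁻¹)
          - ((1 - γ • P')⁻¹ * (1 - γ • P')) * (1 - γ • P)⁻¹ := by noncomm_ring
    rw [e, hMi1, hM'i2, mul_one, one_mul]
  have hMM'eq : (1 - γ • P) - (1 - γ • P') = γ • (P' - P) := by module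
  have hMMn : ‖(1 - γ • P) - (1 - γ • P')‖ ≤ γ * (W * ε) := by
    rw [hMM'eq, norm_smul, Real.norm_eq_abs, abs_of_pos hγ]
    exact mul_le_mul_of_nonneg_left hPdiff hγ.le
  have hMdn : ‖(1 - γ • P')⁻¹ - (1 - γ • P)⁻¹‖ ≤ s * (γ * (W * ε)) * s := by
    rw [hMdiff]
    exact norm_mul3_le _ _ _ hM'n hMMn hMn
  -- Ptil difference
  have hPtilId : Ptil' - Ptil = (P' - P)
      + γ • ((P' - P) * (1 - γ • P')⁻¹ * P'
          + P * ((1 - γ • P')⁻¹ - (1 - γ • P)⁻¹) * P'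
          + P * (1 - γ • P)⁻¹ * (P' - P)) := by
    have e := triple_diff P P' (1 - γ • P)⁻¹ (1 - γ • P')⁻¹ P P'
    calc Ptil' - Ptil
        = (P' - P) + γ • (P' * (1 - γ • P')⁻¹ * P' - P * (1 - γ • P)⁻¹ * P) := by
          rw [hPtil, hPtil']; module
      _ = _ := by rw [e]
  have hPtd : ‖Ptil' - Ptil‖ ≤ L * (W * ε) := by
    have t1 : ‖(P' - P) * (1 - γ • P')⁻¹ * P'‖ ≤ (W * ε) * s * Γ :=
      norm_mul3_le _ _ _ hPdiff hM'n hP'n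
    have t2 : ‖P * ((1 - γ • P')⁻¹ - (1 - γ • P)⁻¹) * P'‖ ≤ (Γ - 1) * (s * (γ * (W * ε)) * s) * Γ :=
      norm_mul3_le _ _ _ hPn hMdn hP'n
    have t3 : ‖P * (1 - γ • P)⁻¹ * (P' - P)‖ ≤ (Γ - 1) * s * (W * ε) :=
      norm_mul3_le _ _ _ hPn hMn hPdiff
    have h3 : ‖(P' - P) * (1 - γ • P')⁻¹ * P'
        + P * ((1 - γ • P')⁻¹ - (1 - γ • P)⁻¹) * P'
        + P * (1 - γ • P)⁻¹ * (P' - P)‖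
        ≤ (W * ε) * s * Γ + (Γ - 1) * (s * (γ * (W * ε)) * s) * Γ + (Γ - 1) * s * (W * ε) :=
      le_trans (norm_add3_le _ _ _) (by linarith)
    have hsm : ‖γ • ((P' - P) * (1 - γ • P')⁻¹ * P'
        + P * ((1 - γ • P')⁻¹ - (1 - γ • P)⁻¹) * P'
        + P * (1 - γ • P)⁻¹ * (P' - P))‖
        ≤ γ * ((W * ε) * s * Γ + (Γ - 1) * (s * (γ * (W * ε)) * s) * Γ + (Γ - 1) * s * (W * ε)) := by
      rw [norm_smul, Real.norm_eq_abs, abs_of_pos hγ]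
      exact mul_le_mul_of_nonneg_left h3 hγ.le
    calc ‖Ptil' - Ptil‖
        ≤ (W * ε) + γ * ((W * ε) * s * Γ + (Γ - 1) * (s * (γ * (W * ε)) * s) * Γ
            + (Γ - 1) * s * (W * ε)) := by
          rw [hPtilId]
          exact le_trans (norm_add_le _ _) (add_le_add hPdiff hsm)
      _ ≤ s * s * (W * ε) := scalar_Pt hγ hΓ hs1 hu hδ0
      _ = L * (W * ε) := by rw [hLs]
  have hPtil'n : ‖Ptil'‖ ≤ Γ - 1 + L * (W * ε) := by
    have e : Ptil' = Ptil + (Ptil' - Ptil) := by abel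
    calc ‖Ptil'‖ = ‖Ptil + (Ptil' - Ptil)‖ := by rw [← e]
      _ ≤ ‖Ptil‖ + ‖Ptil' - Ptil‖ := norm_add_le _ _
      _ ≤ Γ - 1 + L * (W * ε) := by linarith
  -- the Gram matrices
  have hBPB : (Bᵀ * Ptil * B).PosSemidef := by
    have h := hPtilPSD.conjTranspose_mul_mul_same B
    rwa [conjTranspose_eq_transpose_of_trivial] at h
  have hGsub : (Bᵀ * Ptil * B + R) - (1:ℝ) • (1 : Matrix (Fin m) (Fin m) ℝ)
      = Bᵀ * Ptil * B + (R - 1) := by rw [one_smul]; abel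
  have hGpsd : ((Bᵀ * Ptil * B + R) - (1:ℝ) • (1 : Matrix (Fin m) (Fin m) ℝ)).PosSemidef := by
    rw [hGsub]; exact hBPB.add hR
  obtain ⟨hGpd, hGi1, hGi2, hGn⟩ := inv_bound one_pos hGpsd
  rw [inv_one] at hGn
  have hB'PB' : (B'ᵀ * Ptil' * B').PosSemidef := by
    have h := hPtil'PSD.conjTranspose_mul_mul_same B'
    rwa [conjTranspose_eq_transpose_of_trivial] at h
  have hG'sub : (B'ᵀ * Ptil' * B' + R) - (1:ℝ) • (1 : Matrix (Fin m) (Fin m) ℝ)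
      = B'ᵀ * Ptil' * B' + (R - 1) := by rw [one_smul]; abel
  have hG'psd : ((B'ᵀ * Ptil' * B' + R) - (1:ℝ) • (1 : Matrix (Fin m) (Fin m) ℝ)).PosSemidef := by
    rw [hG'sub]; exact hB'PB'.add hR
  obtain ⟨hG'pd, hG'i1, hG'i2, hG'n⟩ := inv_bound one_pos hG'psd
  rw [inv_one] at hG'n
  -- difference of the H and G matrices
  have hBtn : ‖Bᵀ‖ ≤ Γ - 1 := by rw [l2_norm_transpose]; exact hBn
  have hBdtn : ‖B'ᵀ - Bᵀ‖ ≤ ε := by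
    rw [← transpose_sub, l2_norm_transpose]; exact hBdiff
  have hB'tn : ‖B'ᵀ‖ ≤ Γ := by rw [l2_norm_transpose]; exact hB'n
  have hHd : ‖B'ᵀ * Ptil' * A' - Bᵀ * Ptil * A‖ ≤ 2 * (L + 1) * Γ ^ 2 * (W * ε) := by
    have e := triple_diff Bᵀ B'ᵀ Ptil Ptil' A A'
    have t1 : ‖(B'ᵀ - Bᵀ) * Ptil' * A'‖ ≤ ε * (Γ - 1 + L * (W * ε)) * Γ :=
      norm_mul3_le _ _ _ hBdtn hPtil'n hA'n
    have t2 : ‖Bᵀ * (Ptil' - Ptil) * A'‖ ≤ (Γ - 1) * (L * (W * ε)) * Γ :=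
      norm_mul3_le _ _ _ hBtn hPtd hA'n
    have t3 : ‖Bᵀ * Ptil * (A' - A)‖ ≤ (Γ - 1) * (Γ - 1) * ε :=
      norm_mul3_le _ _ _ hBtn hPtiln hAdiff
    calc ‖B'ᵀ * Ptil' * A' - Bᵀ * Ptil * A‖
        = ‖(B'ᵀ - Bᵀ) * Ptil' * A' + Bᵀ * (Ptil' - Ptil) * A' + Bᵀ * Ptil * (A' - A)‖ := by
          rw [e]
      _ ≤ ε * (Γ - 1 + L * (W * ε)) * Γ + (Γ - 1) * (L * (W * ε)) * Γ + (Γ - 1) * (Γ - 1) * ε :=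
          le_trans (norm_add3_le _ _ _) (by linarith)
      _ ≤ 2 * (L + 1) * Γ ^ 2 * (W * ε) := scalar_H hΓ hL1 hε.le hεδ hWε
  have hGd : ‖(B'ᵀ * Ptil' * B' + R) - (Bᵀ * Ptil * B + R)‖ ≤ 2 * (L + 1) * Γ ^ 2 * (W * ε) := by
    have e0 : (B'ᵀ * Ptil' * B' + R) - (Bᵀ * Ptil * B + R)
        = B'ᵀ * Ptil' * B' - Bᵀ * Ptil * B := by abel
    have e := triple_diff Bᵀ B'ᵀ Ptil Ptil' B B'
    have t1 : ‖(B'ᵀ - Bᵀ) * Ptil' * B'‖ ≤ ε * (Γ - 1 + L * (W * ε)) * Γ :=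
      norm_mul3_le _ _ _ hBdtn hPtil'n hB'n
    have t2 : ‖Bᵀ * (Ptil' - Ptil) * B'‖ ≤ (Γ - 1) * (L * (W * ε)) * Γ :=
      norm_mul3_le _ _ _ hBtn hPtd hB'n
    have t3 : ‖Bᵀ * Ptil * (B' - B)‖ ≤ (Γ - 1) * (Γ - 1) * ε :=
      norm_mul3_le _ _ _ hBtn hPtiln hBdiff
    calc ‖(B'ᵀ * Ptil' * B' + R) - (Bᵀ * Ptil * B + R)‖
        = ‖(B'ᵀ - Bᵀ) * Ptil' * B' + Bᵀ * (Ptil' - Ptil) * B' + Bᵀ * Ptil * (B' - B)‖ := by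
          rw [e0, e]
      _ ≤ ε * (Γ - 1 + L * (W * ε)) * Γ + (Γ - 1) * (L * (W * ε)) * Γ + (Γ - 1) * (Γ - 1) * ε :=
          le_trans (norm_add3_le _ _ _) (by linarith)
      _ ≤ 2 * (L + 1) * Γ ^ 2 * (W * ε) := scalar_H hΓ hL1 hε.le hεδ hWε
  -- the gain difference
  have hGK : (Bᵀ * Ptil * B + R) * K = -(Bᵀ * Ptil * A) := by
    rw [hK, Matrix.mul_neg, ← Matrix.mul_assoc, hGi1, Matrix.one_mul]
  have e3 : (B'ᵀ * Ptil' * B' + R)⁻¹ * ((Bᵀ * Ptil * B + R) - (B'ᵀ * Ptil' * B' + R)) * K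
      = (B'ᵀ * Ptil' * B' + R)⁻¹ * (-(Bᵀ * Ptil * A)) - K := by
    calc (B'ᵀ * Ptil' * B' + R)⁻¹ * ((Bᵀ * Ptil * B + R) - (B'ᵀ * Ptil' * B' + R)) * K
        = (B'ᵀ * Ptil' * B' + R)⁻¹ * ((Bᵀ * Ptil * B + R) * K)
          - (B'ᵀ * Ptil' * B' + R)⁻¹ * (B'ᵀ * Ptil' * B' + R) * K := by
          rw [Matrix.mul_sub, Matrix.sub_mul,
            Matrix.mul_assoc ((B'ᵀ * Ptil' * B' + R)⁻¹) (Bᵀ * Ptil * B + R) K]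
      _ = _ := by rw [hGK, hG'i2, Matrix.one_mul]
  have hKid : K' - K
      = -((B'ᵀ * Ptil' * B' + R)⁻¹ * (B'ᵀ * Ptil' * A' - Bᵀ * Ptil * A))
        + (B'ᵀ * Ptil' * B' + R)⁻¹ * ((Bᵀ * Ptil * B + R) - (B'ᵀ * Ptil' * B' + R)) * K := by
    rw [e3, hK', hK]
    simp only [Matrix.mul_sub, Matrix.mul_neg]
    abel
  have hKd : ‖K' - K‖ ≤ V * (W * ε) := by
    have hGd' : ‖(Bᵀ * Ptil * B + R) - (B'ᵀ * Ptil' * B' + R)‖ ≤ 2 * (L + 1) * Γ ^ 2 * (W * ε) := by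
      rw [norm_sub_rev]; exact hGd
    have t1 : ‖(B'ᵀ * Ptil' * B' + R)⁻¹ * (B'ᵀ * Ptil' * A' - Bᵀ * Ptil * A)‖
        ≤ 1 * (2 * (L + 1) * Γ ^ 2 * (W * ε)) := norm_mul2_le _ _ hG'n hHd
    have t2 : ‖(B'ᵀ * Ptil' * B' + R)⁻¹ * ((Bᵀ * Ptil * B + R) - (B'ᵀ * Ptil' * B' + R)) * K‖
        ≤ 1 * (2 * (L + 1) * Γ ^ 2 * (W * ε)) * (Γ - 1) := norm_mul3_le _ _ _ hG'n hGd' hKn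
    have step : ‖K' - K‖
        ≤ ‖(B'ᵀ * Ptil' * B' + R)⁻¹ * (B'ᵀ * Ptil' * A' - Bᵀ * Ptil * A)‖
          + ‖(B'ᵀ * Ptil' * B' + R)⁻¹ * ((Bᵀ * Ptil * B + R) - (B'ᵀ * Ptil' * B' + R)) * K‖ := by
      rw [hKid]
      exact le_trans (norm_add_le _ _) (by rw [norm_neg])
    have efin := scalar_Kd (Γ := Γ) (W := W) (ε := ε) hVdef
    linarith [t1, t2, step, efin]
  refine ⟨by calc ‖K' - K‖ ≤ V * (W * ε) := hKd
    _ = V * W * ε := by ring, ?_⟩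
  -- now the F bound
  have hK'n : ‖K'‖ ≤ Γ - 1 + V * (W * ε) := by
    have e : K' = K + (K' - K) := by abel
    calc ‖K'‖ = ‖K + (K' - K)‖ := by rw [← e]
      _ ≤ ‖K‖ + ‖K' - K‖ := norm_add_le _ _
      _ ≤ Γ - 1 + V * (W * ε) := by linarith
  have hCn : ‖A + B * K‖ ≤ Γ ^ 2 := by
    calc ‖A + B * K‖ ≤ ‖A‖ + ‖B * K‖ := norm_add_le _ _
      _ ≤ (Γ - 1) + (Γ - 1) * (Γ - 1) := by
          have := norm_mul2_le B K hBn hKn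
          linarith
      _ ≤ Γ ^ 2 := scalar_Cn hΓ
  have hCd : ‖(A' + B' * K') - (A + B * K)‖ ≤ (5/4) * V * Γ * (W * ε) := by
    have e : (A' + B' * K') - (A + B * K) = (A' - A) + ((B' - B) * K' + B * (K' - K)) := by
      have e2 : B' * K' - B * K = (B' - B) * K' + B * (K' - K) := by
        simp only [Matrix.sub_mul, Matrix.mul_sub]; abel
      calc (A' + B' * K') - (A + B * K) = (A' - A) + (B' * K' - B * K) := by abel
        _ = _ := by rw [e2]
    have t2 : ‖(B' - B) * K'‖ ≤ ε * (Γ - 1 + V * (W * ε)) := norm_mul2_le _ _ hBdiff hK'n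
    have t3 : ‖B * (K' - K)‖ ≤ (Γ - 1) * (V * (W * ε)) := norm_mul2_le _ _ hBn hKd
    have tri : ‖(A' + B' * K') - (A + B * K)‖
        ≤ ε + (ε * (Γ - 1 + V * (W * ε)) + (Γ - 1) * (V * (W * ε))) := by
      rw [e]
      refine le_trans (norm_add_le _ _) ?_
      refine add_le_add hAdiff (le_trans (norm_add_le _ _) (by linarith))
    calc ‖(A' + B' * K') - (A + B * K)‖ ≤ _ := tri
      _ ≤ (5/4) * V * Γ * (W * ε) := scalar_Cd hΓ hV4 hε.le hεδ hWε
  have hC'n : ‖A' + B' * K'‖ ≤ (3/2) * V * Γ := by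
    have e : A' + B' * K' = (A + B * K) + ((A' + B' * K') - (A + B * K)) := by abel
    calc ‖A' + B' * K'‖ = ‖(A + B * K) + ((A' + B' * K') - (A + B * K))‖ := by rw [← e]
      _ ≤ ‖A + B * K‖ + ‖(A' + B' * K') - (A + B * K)‖ := norm_add_le _ _
      _ ≤ Γ ^ 2 + (5/4) * V * Γ * (W * ε) := by linarith
      _ ≤ (3/2) * V * Γ := scalar_C'n hΓ h4Γ hV0 hδ0.le hWε
  have hPt2LΓ : ‖Ptil'‖ ≤ 2 * L * Γ := by
    calc ‖Ptil'‖ ≤ Γ - 1 + L * (W * ε) := hPtil'n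
      _ ≤ 2 * L * Γ := scalar_Pt2 hΓ hL1 hδ0.le hWε
  -- the F difference identity
  have dK := triple_diff2 Kᵀ K'ᵀ R K K'
  have dC := triple_diff (A + B * K)ᵀ (A' + B' * K')ᵀ Ptil Ptil' (A + B * K) (A' + B' * K')
  have hFid : F' - F
      = ((K'ᵀ - Kᵀ) * R * K' + Kᵀ * R * (K' - K))
        + (((A' + B' * K')ᵀ - (A + B * K)ᵀ) * Ptil' * (A' + B' * K')
          + (A + B * K)ᵀ * (Ptil' - Ptil) * (A' + B' * K')
          + (A + B * K)ᵀ * Ptil * ((A' + B' * K') - (A + B * K))) := by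
    calc F' - F = (K'ᵀ * R * K' - Kᵀ * R * K)
        + ((A' + B' * K')ᵀ * Ptil' * (A' + B' * K') - (A + B * K)ᵀ * Ptil * (A + B * K)) := by
          rw [hF, hF']; abel
      _ = _ := by rw [dK, dC]
  have hKdtn : ‖K'ᵀ - Kᵀ‖ ≤ V * (W * ε) := by
    rw [← transpose_sub, l2_norm_transpose]; exact hKd
  have hKtn : ‖Kᵀ‖ ≤ Γ - 1 := by rw [l2_norm_transpose]; exact hKn
  have hCdtn : ‖(A' + B' * K')ᵀ - (A + B * K)ᵀ‖ ≤ (5/4) * V * Γ * (W * ε) := by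
    rw [← transpose_sub, l2_norm_transpose]; exact hCd
  have hCtn : ‖(A + B * K)ᵀ‖ ≤ Γ ^ 2 := by rw [l2_norm_transpose]; exact hCn
  have t1 : ‖(K'ᵀ - Kᵀ) * R * K'‖ ≤ (V * (W * ε)) * (Γ - 1) * (Γ - 1 + V * (W * ε)) :=
    norm_mul3_le _ _ _ hKdtn hRn hK'n
  have t2 : ‖Kᵀ * R * (K' - K)‖ ≤ (Γ - 1) * (Γ - 1) * (V * (W * ε)) :=
    norm_mul3_le _ _ _ hKtn hRn hKd
  have t3 : ‖((A' + B' * K')ᵀ - (A + B * K)ᵀ) * Ptil' * (A' + B' * K')‖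
      ≤ ((5/4) * V * Γ * (W * ε)) * (2 * L * Γ) * ((3/2) * V * Γ) :=
    norm_mul3_le _ _ _ hCdtn hPt2LΓ hC'n
  have t4 : ‖(A + B * K)ᵀ * (Ptil' - Ptil) * (A' + B' * K')‖
      ≤ Γ ^ 2 * (L * (W * ε)) * ((3/2) * V * Γ) :=
    norm_mul3_le _ _ _ hCtn hPtd hC'n
  have t5 : ‖(A + B * K)ᵀ * Ptil * ((A' + B' * K') - (A + B * K))‖
      ≤ Γ ^ 2 * (Γ - 1) * ((5/4) * V * Γ * (W * ε)) :=
    norm_mul3_le _ _ _ hCtn hPtiln hCd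
  have tri : ‖F' - F‖
      ≤ (V * (W * ε)) * (Γ - 1) * (Γ - 1 + V * (W * ε))
        + (Γ - 1) * (Γ - 1) * (V * (W * ε))
        + ((5/4) * V * Γ * (W * ε)) * (2 * L * Γ) * ((3/2) * V * Γ)
        + Γ ^ 2 * (L * (W * ε)) * ((3/2) * V * Γ)
        + Γ ^ 2 * (Γ - 1) * ((5/4) * V * Γ * (W * ε)) := by
    rw [hFid]
    refine le_trans (norm_add_le _ _) ?_
    have s1 : ‖(K'ᵀ - Kᵀ) * R * K' + Kᵀ * R * (K' - K)‖
        ≤ ‖(K'ᵀ - Kᵀ) * R * K'‖ + ‖Kᵀ * R * (K' - K)‖ := norm_add_le _ _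
    have s2 := norm_add3_le (((A' + B' * K')ᵀ - (A + B * K)ᵀ) * Ptil' * (A' + B' * K'))
      ((A + B * K)ᵀ * (Ptil' - Ptil) * (A' + B' * K'))
      ((A + B * K)ᵀ * Ptil * ((A' + B' * K') - (A + B * K)))
    linarith
  calc ‖F' - F‖ ≤ _ := tri
    _ ≤ 10 * V ^ 2 * L * Γ ^ 4 * (W * ε) := scalar_final hΓ hL1 hδ0 hWε hVdef
    _ = 10 * V ^ 2 * L * Γ ^ 4 * W * ε := by ring
end

section
/- Let γ > 0 and Γ̃ ≥ 1 with 1 − γΓ̃ > 0. Let P, P′ ∈ ℝ^{n×n} be symmetric matrices with ‖P‖ ≤ Γ̃ − 1 and ‖P′ − P‖ ≤ δ for some 0 < δ ≤ 1 (so ‖P′‖ ≤ Γ̃ and both I_n − γP and I_n − γP′ are invertible). Then ‖(I_n − γP′)⁻¹P′ − (I_n − γP)⁻¹P‖ ≤ δ/(1 − γΓ̃)². -/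
open Matrix
open scoped Matrix.Norms.L2Operator

/-- The L2 operator norm of the identity matrix is at most 1. -/
lemma l2_norm_one_le {n : ℕ} : ‖(1 : Matrix (Fin n) (Fin n) ℝ)‖ ≤ 1 := by
  have h : ‖(1 : Matrix (Fin n) (Fin n) ℝ)‖ * ‖(1 : Matrix (Fin n) (Fin n) ℝ)‖
      = ‖(1 : Matrix (Fin n) (Fin n) ℝ)‖ := by
    rw [← Matrix.l2_opNorm_conjTranspose_mul_self (1 : Matrix (Fin n) (Fin n) ℝ)]
    simp
  nlinarith [norm_nonneg (1 : Matrix (Fin n) (Fin n) ℝ)]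

/-- Bound on the inverse of `1 - x` in the L2 operator norm. -/
lemma l2_inverse_one_sub_le {n : ℕ} (x : Matrix (Fin n) (Fin n) ℝ) (h : ‖x‖ < 1) :
    ‖Ring.inverse (1 - x)‖ ≤ (1 - ‖x‖)⁻¹ := by
  rw [← geom_series_eq_inverse x h]
  have := tsum_geometric_le_of_norm_lt_one x h
  have h1 := l2_norm_one_le (n := n)
  linarith

/-- Lipschitz estimate for `P ↦ (I - γP)⁻¹ P` in spectral norm. -/
theorem leqr_resolvent_lipschitz {n : ℕ} (γ Γ δ : ℝ)
    (hγ : 0 < γ) (hΓ : 1 ≤ Γ) (hγΓ : 0 < 1 - γ * Γ)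
    (P P' : Matrix (Fin n) (Fin n) ℝ)
    (hPsymm : P.IsSymm) (hP'symm : P'.IsSymm)
    (hPnorm : ‖P‖ ≤ Γ - 1)
    (hδpos : 0 < δ) (hδle : δ ≤ 1)
    (hdiff : ‖P' - P‖ ≤ δ) :
    ‖(1 - γ • P')⁻¹ * P' - (1 - γ • P)⁻¹ * P‖ ≤ δ / (1 - γ * Γ) ^ 2 := by
  have hP'norm : ‖P'‖ ≤ Γ := by
    calc ‖P'‖ = ‖(P' - P) + P‖ := by rw [sub_add_cancel]
    _ ≤ ‖P' - P‖ + ‖P‖ := norm_add_le _ _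
    _ ≤ δ + (Γ - 1) := add_le_add hdiff hPnorm
    _ ≤ Γ := by linarith
  have hγ1 : γ * Γ < 1 := by linarith
  have hxnorm : ‖γ • P‖ ≤ γ * Γ := by
    rw [norm_smul, Real.norm_eq_abs, abs_of_pos hγ]
    have : ‖P‖ ≤ Γ := by linarith
    nlinarith [norm_nonneg P]
  have hx'norm : ‖γ • P'‖ ≤ γ * Γ := by
    rw [norm_smul, Real.norm_eq_abs, abs_of_pos hγ]
    nlinarith [norm_nonneg P']
  have hx : ‖γ • P‖ < 1 := lt_of_le_of_lt hxnorm hγ1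
  have hx' : ‖γ • P'‖ < 1 := lt_of_le_of_lt hx'norm hγ1
  have hu : IsUnit (1 - γ • P) := isUnit_one_sub_of_norm_lt_one hx
  have hu' : IsUnit (1 - γ • P') := isUnit_one_sub_of_norm_lt_one hx'
  -- key algebraic identity
  have key : (1 - γ • P')⁻¹ * P' - (1 - γ • P)⁻¹ * P
      = (1 - γ • P')⁻¹ * (P' - P) * (1 - γ • P)⁻¹ := by
    have h1 : (1 - γ • P) * (1 - γ • P)⁻¹ = 1 := Matrix.mul_nonsing_inv _
      (Matrix.isUnit_iff_isUnit_det _ |>.mp hu)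
    have h2 : (1 - γ • P')⁻¹ * (1 - γ • P') = 1 := Matrix.nonsing_inv_mul _
      (Matrix.isUnit_iff_isUnit_det _ |>.mp hu')
    have expand : P' * (1 - γ • P) - (1 - γ • P') * P = P' - P := by
      simp only [Matrix.mul_sub, Matrix.sub_mul, Matrix.mul_one, Matrix.one_mul,
        Matrix.mul_smul, Matrix.smul_mul]
      abel
    have hPv : P * (1 - γ • P) = (1 - γ • P) * P := by
      simp only [Matrix.mul_sub, Matrix.sub_mul, Matrix.mul_one, Matrix.one_mul,
        Matrix.mul_smul, Matrix.smul_mul]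
    have h1' : (1 - γ • P)⁻¹ * (1 - γ • P) = 1 := Matrix.nonsing_inv_mul _
      (Matrix.isUnit_iff_isUnit_det _ |>.mp hu)
    have hcomm : P * (1 - γ • P)⁻¹ = (1 - γ • P)⁻¹ * P := by
      calc P * (1 - γ • P)⁻¹ = 1 * (P * (1 - γ • P)⁻¹) := (Matrix.one_mul _).symm
        _ = ((1 - γ • P)⁻¹ * (1 - γ • P)) * (P * (1 - γ • P)⁻¹) := by rw [h1']
        _ = (1 - γ • P)⁻¹ * ((1 - γ • P) * (P * (1 - γ • P)⁻¹)) := by rw [Matrix.mul_assoc]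
        _ = (1 - γ • P)⁻¹ * (((1 - γ • P) * P) * (1 - γ • P)⁻¹) := by rw [Matrix.mul_assoc]
        _ = (1 - γ • P)⁻¹ * ((P * (1 - γ • P)) * (1 - γ • P)⁻¹) := by rw [hPv]
        _ = (1 - γ • P)⁻¹ * (P * ((1 - γ • P) * (1 - γ • P)⁻¹)) := by rw [Matrix.mul_assoc]
        _ = (1 - γ • P)⁻¹ * P := by rw [h1, Matrix.mul_one]
    symm
    calc (1 - γ • P')⁻¹ * (P' - P) * (1 - γ • P)⁻¹
        = (1 - γ • P')⁻¹ * (P' * ((1 - γ • P) * (1 - γ • P)⁻¹))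
          - ((1 - γ • P')⁻¹ * (1 - γ • P')) * (P * (1 - γ • P)⁻¹) := by
          rw [← expand]; noncomm_ring
      _ = (1 - γ • P')⁻¹ * P' - (1 - γ • P)⁻¹ * P := by
          rw [h1, h2, Matrix.mul_one, Matrix.one_mul, hcomm]
  have hinv : ‖(1 - γ • P)⁻¹‖ ≤ (1 - γ * Γ)⁻¹ := by
    rw [Matrix.nonsing_inv_eq_ringInverse]
    refine le_trans (l2_inverse_one_sub_le _ hx) ?_
    apply inv_anti₀ hγΓ
    linarith
  have hinv' : ‖(1 - γ • P')⁻¹‖ ≤ (1 - γ * Γ)⁻¹ := by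
    rw [Matrix.nonsing_inv_eq_ringInverse]
    refine le_trans (l2_inverse_one_sub_le _ hx') ?_
    apply inv_anti₀ hγΓ
    linarith
  rw [key]
  calc ‖(1 - γ • P')⁻¹ * (P' - P) * (1 - γ • P)⁻¹‖
      ≤ ‖(1 - γ • P')⁻¹ * (P' - P)‖ * ‖(1 - γ • P)⁻¹‖ := norm_mul_le _ _
    _ ≤ ‖(1 - γ • P')⁻¹‖ * ‖P' - P‖ * ‖(1 - γ • P)⁻¹‖ := by
        gcongr; exact norm_mul_le _ _
    _ ≤ (1 - γ * Γ)⁻¹ * δ * (1 - γ * Γ)⁻¹ := by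
        have h0 : (0:ℝ) ≤ (1 - γ * Γ)⁻¹ := by positivity
        have := mul_le_mul (mul_le_mul hinv' hdiff (norm_nonneg _) (by positivity))
          hinv (norm_nonneg _) (by positivity)
        linarith
    _ = δ / (1 - γ * Γ) ^ 2 := by rw [div_eq_mul_inv, sq, mul_inv]; ring
end

section
/- Let C_K ≥ 0 and set c* = (C_K² − C_K√(C_K² + 4) + 2)/2. Then 0 < c* ≤ 1 (with c* < 1 when C_K > 0). Moreover, for every K ∈ ℝ^{m×n} with ‖K‖ ≤ C_K, every symmetric M ∈ ℝ^{n×n} with M − I_n positive semidefinite, every s ∈ (0, 1], and every c with 0 < c ≤ c*, the (n+m)×(n+m) block matrix with blocks [[M, MKᵀ], [KM, KMKᵀ + s·I_m]] minus c·s·I_{n+m} is positive semidefinite. -/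
open Matrix
open scoped Matrix.Norms.L2Operator

private lemma scalar_core (C c s a b w : ℝ) (hC : 0 ≤ C) (hc : 0 < c) (hc1 : c ≤ 1)
    (hs : 0 < s) (hs1 : s ≤ 1) (hkey : c * C ^ 2 ≤ (1 - c) ^ 2)
    (ha : 0 ≤ a) (hb : 0 ≤ b) (hw : 0 ≤ w) (htri : a ≤ w + C * b) :
    c * s * (a ^ 2 + b ^ 2) ≤ w ^ 2 + s * b ^ 2 := by
  rcases eq_or_lt_of_le (show c * s ≤ 1 by nlinarith) with h1 | h1
  · have hc' : c = 1 := by nlinarith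
    have hs' : s = 1 := by nlinarith
    have hC0 : C = 0 := by nlinarith
    subst hc' hs' hC0
    nlinarith
  · have ht : 0 < 1 - c * s := by linarith
    have f1 : c * s * (1 - c * s) * a ^ 2 ≤ (1 - c * s) * w ^ 2 + c * s * C ^ 2 * b ^ 2 := by
      have hfac : 0 ≤ (a + (w + C * b)) * (w + C * b - a) :=
        mul_nonneg (by positivity) (by linarith)
      nlinarith [sq_nonneg ((1 - c * s) * w - c * s * C * b),
        mul_nonneg (mul_nonneg (mul_nonneg hc.le hs.le) ht.le) hfac,
        mul_pos hc hs]
    have f2 : c * C ^ 2 ≤ (1 - c) * (1 - c * s) := by nlinarith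
    have := mul_pos hs (mul_pos hc hs)
    nlinarith [mul_nonneg (mul_nonneg hs.le (sq_nonneg b)) (sub_nonneg.2 f2), sq_nonneg b]

private lemma dot_self_eq_norm_sq {n : ℕ} (u : Fin n → ℝ) :
    u ⬝ᵥ u = ‖(EuclideanSpace.equiv (Fin n) ℝ).symm u‖ ^ 2 := by
  rw [EuclideanSpace.norm_eq, Real.sq_sqrt (by positivity)]
  simp [dotProduct, sq, Real.norm_eq_abs, abs_mul_abs_self]

/-- The deterministic block-matrix inequality behind the lower bound
on the conditional second moment of the state-action vector under exploration noise. -/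
theorem block_second_moment_lower_bound (CK : ℝ) (hCK : 0 ≤ CK)
    (cstar : ℝ) (hcstar : cstar = (CK ^ 2 - CK * Real.sqrt (CK ^ 2 + 4) + 2) / 2) :
    (0 < cstar ∧ cstar ≤ 1 ∧ (0 < CK → cstar < 1)) ∧
    ∀ (n m : ℕ) (K : Matrix (Fin m) (Fin n) ℝ), ‖K‖ ≤ CK →
      ∀ (M : Matrix (Fin n) (Fin n) ℝ), M.IsSymm → (M - 1).PosSemidef →
        ∀ s : ℝ, 0 < s → s ≤ 1 → ∀ c : ℝ, 0 < c → c ≤ cstar →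
          (Matrix.fromBlocks M (M * Kᵀ) (K * M) (K * M * Kᵀ + s • 1) -
            (c * s) • (1 : Matrix (Fin n ⊕ Fin m) (Fin n ⊕ Fin m) ℝ)).PosSemidef := by
  -- properties of cstar
  have hr0 : 0 ≤ Real.sqrt (CK ^ 2 + 4) := Real.sqrt_nonneg _
  have hr2 : Real.sqrt (CK ^ 2 + 4) ^ 2 = CK ^ 2 + 4 := Real.sq_sqrt (by positivity)
  set r := Real.sqrt (CK ^ 2 + 4) with hr
  have hrC : CK < r := by nlinarith
  have hpos : 0 < cstar := by rw [hcstar]; nlinarith [mul_nonneg hCK hr0]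
  have hle1 : cstar ≤ 1 := by
    rw [hcstar]; nlinarith [mul_le_mul_of_nonneg_left hrC.le hCK]
  have hroot : (1 - cstar) ^ 2 = CK ^ 2 * cstar := by rw [hcstar]; nlinarith [hr2]
  refine ⟨⟨hpos, hle1, fun h => by rw [hcstar]; nlinarith [mul_lt_mul_of_pos_left hrC h]⟩, ?_⟩
  intro n m K hK M hMsym hMI s hs hs1 c hc hcc
  have hc1 : c ≤ 1 := hcc.trans hle1
  have hkey : c * CK ^ 2 ≤ (1 - c) ^ 2 := by
    nlinarith [mul_nonneg (sub_nonneg.2 hcc) (show 0 ≤ 2 + CK ^ 2 - c - cstar by nlinarith)]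
  have hM : Mᵀ = M := hMsym
  rw [posSemidef_iff_dotProduct_mulVec]
  constructor
  · -- Hermitian
    show _ᴴ = _
    rw [conjTranspose_eq_transpose_of_trivial, transpose_sub, transpose_smul,
      transpose_one, fromBlocks_transpose, transpose_mul, transpose_mul,
      transpose_transpose, hM, transpose_add, transpose_smul, transpose_one,
      transpose_mul, transpose_mul, transpose_transpose, hM, Matrix.mul_assoc]
  · intro x
    have hx : x = Sum.elim (x ∘ Sum.inl) (x ∘ Sum.inr) := by
      funext i; cases i <;> rfl
    set u : Fin n → ℝ := x ∘ Sum.inl with hu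
    set v : Fin m → ℝ := x ∘ Sum.inr with hv
    have hstar : star x = x := by simp
    rw [hstar, hx]
    -- quadratic form identity
    have hcross : v ⬝ᵥ ((K * M) *ᵥ u) = (Kᵀ *ᵥ v) ⬝ᵥ (M *ᵥ u) := by
      rw [← mulVec_mulVec, dotProduct_mulVec v K, ← mulVec_transpose]
    have hquad4 : v ⬝ᵥ ((K * M * Kᵀ) *ᵥ v) = (Kᵀ *ᵥ v) ⬝ᵥ ((M * Kᵀ) *ᵥ v) := by
      rw [Matrix.mul_assoc, ← mulVec_mulVec, dotProduct_mulVec v K, ← mulVec_transpose]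
    have hident : Sum.elim u v ⬝ᵥ ((Matrix.fromBlocks M (M * Kᵀ) (K * M) (K * M * Kᵀ + s • 1) -
          (c * s) • (1 : Matrix (Fin n ⊕ Fin m) (Fin n ⊕ Fin m) ℝ)) *ᵥ Sum.elim u v)
        = (u + Kᵀ *ᵥ v) ⬝ᵥ (M *ᵥ (u + Kᵀ *ᵥ v)) + s * (v ⬝ᵥ v)
          - c * s * (u ⬝ᵥ u + v ⬝ᵥ v) := by
      simp only [sub_mulVec, smul_mulVec, one_mulVec, fromBlocks_mulVec,
        dotProduct_sub, sumElim_dotProduct_sumElim, dotProduct_add, add_mulVec,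
        dotProduct_smul, smul_eq_mul, mulVec_add, add_dotProduct, mulVec_mulVec,
        Sum.elim_comp_inl, Sum.elim_comp_inr]
      rw [hcross, hquad4]
      ring
    rw [hident]
    -- lower bound via M - 1 ⪰ 0
    set w : Fin n → ℝ := u + Kᵀ *ᵥ v with hw
    have hMw : w ⬝ᵥ w ≤ w ⬝ᵥ (M *ᵥ w) := by
      have := hMI.dotProduct_mulVec_nonneg w
      simp only [star_trivial, sub_mulVec, one_mulVec, dotProduct_sub] at this
      linarith
    -- norms
    set a := ‖(EuclideanSpace.equiv (Fin n) ℝ).symm u‖ with ha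
    set b := ‖(EuclideanSpace.equiv (Fin m) ℝ).symm v‖ with hb
    set wn := ‖(EuclideanSpace.equiv (Fin n) ℝ).symm w‖ with hwn
    have htri : a ≤ wn + CK * b := by
      have h1 : (EuclideanSpace.equiv (Fin n) ℝ).symm u
          = (EuclideanSpace.equiv (Fin n) ℝ).symm w
            - (EuclideanSpace.equiv (Fin n) ℝ).symm (Kᵀ *ᵥ v) := by
        rw [← map_sub]; congr 1; rw [hw]; abel
      have h2 : ‖(EuclideanSpace.equiv (Fin n) ℝ).symm (Kᵀ *ᵥ v)‖
          ≤ CK * b := by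
        have h3 := Kᵀ.l2_opNorm_mulVec ((EuclideanSpace.equiv (Fin m) ℝ).symm v)
        have h4 : ‖Kᵀ‖ = ‖K‖ := by
          rw [← conjTranspose_eq_transpose_of_trivial]
          exact K.l2_opNorm_conjTranspose
        calc ‖(EuclideanSpace.equiv (Fin n) ℝ).symm (Kᵀ *ᵥ v)‖
            ≤ ‖Kᵀ‖ * b := h3
          _ ≤ CK * b := by
              apply mul_le_mul_of_nonneg_right _ (norm_nonneg _)
              rw [h4]; exact hK
      calc a ≤ wn + ‖(EuclideanSpace.equiv (Fin n) ℝ).symm (Kᵀ *ᵥ v)‖ := by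
            rw [ha, h1]; exact norm_sub_le _ _
        _ ≤ wn + CK * b := by linarith
    have hfin := scalar_core CK c s a b wn hCK hc hc1 hs hs1 hkey
      (norm_nonneg _) (norm_nonneg _) (norm_nonneg _) htri
    rw [← dot_self_eq_norm_sq, ← dot_self_eq_norm_sq, ← dot_self_eq_norm_sq] at hfin
    linarith
end

section
/- Let λ > 0, let V̄ ∈ ℝ^{d×d} be a symmetric matrix with V̄ − λI_d positive semidefinite (so V̄ is invertible), let θ, S ∈ ℝ^{d×n}, and set θ′ = θ + V̄⁻¹(S − λθ). Then Tr((θ′ − θ)ᵀ V̄ (θ′ − θ)) ≤ 2 Tr(Sᵀ V̄⁻¹ S) + 2λ‖θ‖_F². -/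
open Matrix
open scoped Matrix.Norms.L2Operator

private lemma psd_trace_nonneg {m : Type*} [Fintype m] [DecidableEq m]
    {M : Matrix m m ℝ} (h : M.PosSemidef) : 0 ≤ M.trace :=
  h.trace_nonneg

private lemma psd_smul {m : Type*} [Fintype m] {a : ℝ} {M : Matrix m m ℝ}
    (ha : 0 ≤ a) (h : M.PosSemidef) : (a • M).PosSemidef := by
  exact h.smul ha

private lemma tr_conj_nonneg {d n : ℕ} (M : Matrix (Fin d) (Fin d) ℝ)
    (hM : M.PosSemidef) (X : Matrix (Fin d) (Fin n) ℝ) :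
    0 ≤ (Xᵀ * M * X).trace := by
  have h := hM.conjTranspose_mul_mul_same X
  rw [conjTranspose_eq_transpose_of_trivial] at h
  exact psd_trace_nonneg h

/-- Deterministic error decomposition for the regularized
least-squares estimator: `Tr((θ' - θ)ᵀ V̄ (θ' - θ)) ≤ 2 Tr(Sᵀ V̄⁻¹ S) + 2λ‖θ‖_F²`,
where `‖θ‖_F² = Tr(θᵀθ)`. -/
theorem regularized_least_squares_error_decomposition {d n : ℕ}
    (lam : ℝ) (hlam : 0 < lam)
    (Vbar : Matrix (Fin d) (Fin d) ℝ) (hVsymm : Vbar.IsSymm)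
    (hV : (Vbar - lam • 1).PosSemidef)
    (θ S θ' : Matrix (Fin d) (Fin n) ℝ)
    (hθ' : θ' = θ + Vbar⁻¹ * (S - lam • θ)) :
    ((θ' - θ)ᵀ * Vbar * (θ' - θ)).trace ≤
      2 * (Sᵀ * Vbar⁻¹ * S).trace + 2 * lam * (θᵀ * θ).trace := by
  have hone : (lam • (1 : Matrix (Fin d) (Fin d) ℝ)).PosDef := by
    refine Matrix.PosDef.of_dotProduct_mulVec_pos (by simp [Matrix.IsHermitian]) fun x hx => ?_
    simp only [smul_mulVec, one_mulVec, dotProduct_smul, smul_eq_mul, star_trivial]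
    exact mul_pos hlam (by simpa using Matrix.dotProduct_star_self_pos_iff.mpr (show x ≠ 0 from hx))
  have hVpd : Vbar.PosDef := by
    have heq : Vbar = (Vbar - lam • 1) + lam • 1 := by abel
    rw [heq]; exact Matrix.PosDef.posSemidef_add hV hone
  have hdet : IsUnit Vbar.det := hVpd.det_pos.ne'.isUnit
  have hVinv : Vbar * Vbar⁻¹ = 1 := mul_nonsing_inv _ hdet
  have hinvV : Vbar⁻¹ * Vbar = 1 := nonsing_inv_mul _ hdet
  set W := Vbar⁻¹ with hWdef
  have hWpd : W.PosDef := hVpd.inv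
  have hWsymm : Wᵀ = W := by
    rw [← conjTranspose_eq_transpose_of_trivial]; exact hWpd.1.eq
  set A := S - lam • θ with hA
  set B := S + lam • θ with hB
  have hE : θ' - θ = W * A := by rw [hθ']; abel
  have key : (θ' - θ)ᵀ * Vbar * (θ' - θ) = Aᵀ * W * A := by
    rw [hE, transpose_mul, hWsymm]
    calc Aᵀ * W * Vbar * (W * A) = Aᵀ * ((W * Vbar) * (W * A)) := by
          simp only [Matrix.mul_assoc]
      _ = Aᵀ * W * A := by rw [hinvV, Matrix.one_mul, ← Matrix.mul_assoc]
  have expand : Aᵀ * W * A + Bᵀ * W * B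
      = (2:ℝ) • (Sᵀ * W * S) + (2*lam^2) • (θᵀ * W * θ) := by
    simp only [hA, hB, transpose_sub, transpose_add, transpose_smul, Matrix.sub_mul,
      Matrix.add_mul, Matrix.mul_sub, Matrix.mul_add, Matrix.smul_mul, Matrix.mul_smul,
      smul_smul, smul_sub, smul_add]
    module
  have hBtr : 0 ≤ (Bᵀ * W * B).trace := tr_conj_nonneg W hWpd.posSemidef B
  have hsum : (Aᵀ * W * A).trace + (Bᵀ * W * B).trace
      = 2 * (Sᵀ * W * S).trace + 2 * lam^2 * (θᵀ * W * θ).trace := by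
    rw [← trace_add, expand, trace_add, trace_smul, trace_smul, smul_eq_mul, smul_eq_mul]

  -- second key: lam^2 * Tr(θᵀWθ) ≤ lam * Tr(θᵀθ)
  have hVpsd := hVpd.posSemidef
  obtain ⟨s, hsH, hs⟩ : ∃ s : Matrix (Fin d) (Fin d) ℝ, sᴴ = s ∧ s * s = Vbar :=
    by open scoped MatrixOrder in
      exact ⟨CFC.sqrt Vbar, (CFC.sqrt_nonneg Vbar).posSemidef.1.eq,
        CFC.sqrt_mul_sqrt_self Vbar hVpsd.nonneg⟩
  have hM1 : (Vbar * Vbar - lam • Vbar).PosSemidef := by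
    have h2 : Vbar * Vbar - lam • Vbar = s * (Vbar - lam • 1) * sᴴ := by
      rw [hsH, ← hs]
      simp only [Matrix.mul_sub, Matrix.sub_mul, Matrix.mul_smul, Matrix.smul_mul,
        Matrix.mul_one, Matrix.mul_assoc]
    rw [h2]
    exact hV.mul_mul_conjTranspose_same s
  have hcore : W * (Vbar * Vbar - lam • Vbar) * W = 1 - lam • W := by
    have e1 : W * (Vbar * Vbar) = Vbar := by
      rw [← Matrix.mul_assoc, hinvV, Matrix.one_mul]
    calc W * (Vbar * Vbar - lam • Vbar) * W
        = (W * (Vbar * Vbar) - lam • (W * Vbar)) * W := by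
          rw [Matrix.mul_sub, Matrix.mul_smul]
      _ = (Vbar - lam • (1 : Matrix (Fin d) (Fin d) ℝ)) * W := by rw [e1, hinvV]
      _ = 1 - lam • W := by
          rw [Matrix.sub_mul, Matrix.smul_mul, hVinv, Matrix.one_mul]
  have hM2 : (lam • (1 : Matrix (Fin d) (Fin d) ℝ) - lam^2 • W).PosSemidef := by
    have h3 : lam • (1 : Matrix (Fin d) (Fin d) ℝ) - lam^2 • W
        = W * (lam • (Vbar * Vbar - lam • Vbar)) * Wᴴ := by
      rw [conjTranspose_eq_transpose_of_trivial, hWsymm, Matrix.mul_smul, Matrix.smul_mul,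
        hcore, smul_sub, smul_smul, ← pow_two]
    rw [h3]
    exact (psd_smul hlam.le hM1).mul_mul_conjTranspose_same W
  have h4 : 0 ≤ (θᵀ * (lam • (1 : Matrix (Fin d) (Fin d) ℝ) - lam^2 • W) * θ).trace :=
    tr_conj_nonneg _ hM2 θ
  have h5 : lam^2 * (θᵀ * W * θ).trace ≤ lam * (θᵀ * θ).trace := by
    have hexp : θᵀ * (lam • (1 : Matrix (Fin d) (Fin d) ℝ) - lam^2 • W) * θ
        = lam • (θᵀ * θ) - lam^2 • (θᵀ * W * θ) := by
      simp only [Matrix.mul_sub, Matrix.sub_mul, Matrix.mul_smul, Matrix.smul_mul,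
        Matrix.mul_one, Matrix.mul_assoc]
    rw [hexp, trace_sub, trace_smul, trace_smul, smul_eq_mul, smul_eq_mul] at h4
    linarith
  rw [key]
  linarith [tr_conj_nonneg W hWpd.posSemidef A]
end

section
/- Let γ > 0, ν ∈ ℝⁿ, and let D ∈ ℝ^{n×n} and F ∈ ℝ^{m×m} be symmetric matrices and E ∈ ℝ^{m×n} a matrix such that I_m − γF is positive definite and, with U = D + γEᵀ(I_m − γF)⁻¹E, the matrix I_n − γU is positive definite. Let w and η be independent standard Gaussian vectors on ℝⁿ and ℝᵐ respectively, and set x = ν + w. Then E[exp((γ/2)(xᵀDx + 2ηᵀEx + ηᵀFη))] = (det(I_n − γU))^{−1/2} · (det(I_m − γF))^{−1/2} · exp((γ/2) νᵀŨν), where Ũ = (I_n − γU)⁻¹U. -/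
open Matrix MeasureTheory ProbabilityTheory
open scoped Matrix

open Real
open scoped ENNReal NNReal

set_option linter.unusedVariables false

lemma pi_gaussian_eq_withDensity (k : ℕ) :
    (Measure.pi fun _ : Fin k => gaussianReal 0 1) =
      (volume : Measure (Fin k → ℝ)).withDensity
        (fun x => ENNReal.ofReal (∏ i, gaussianPDFReal 0 1 (x i))) := by
  refine Measure.pi_eq fun s hs => ?_
  rw [withDensity_apply _ (MeasurableSet.univ_pi hs)]
  have h1 : ∀ x : Fin k → ℝ, (Set.univ.pi s).indicator
      (fun x : Fin k → ℝ => ENNReal.ofReal (∏ i, gaussianPDFReal 0 1 (x i))) x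
      = ENNReal.ofReal (∏ i, (s i).indicator (gaussianPDFReal 0 1) (x i)) := by
    intro x
    by_cases hx : x ∈ Set.univ.pi s
    · rw [Set.indicator_of_mem hx]
      congr 1
      exact Finset.prod_congr rfl fun i _ =>
        (Set.indicator_of_mem (hx i (Set.mem_univ i)) _).symm
    · rw [Set.indicator_of_notMem hx]
      rw [Set.mem_univ_pi] at hx
      push_neg at hx
      obtain ⟨i, hi⟩ := hx
      rw [Finset.prod_eq_zero (Finset.mem_univ i) (Set.indicator_of_notMem hi _)]
      simp
  rw [← lintegral_indicator (MeasurableSet.univ_pi hs)]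
  simp_rw [h1]
  have hint : ∀ i : Fin k, Integrable ((s i).indicator (gaussianPDFReal 0 1)) :=
    fun i => (integrable_gaussianPDFReal 0 1).indicator (hs i)
  rw [volume_pi]
  rw [← ofReal_integral_eq_lintegral_ofReal
      (Integrable.fintype_prod (f := fun i => (s i).indicator (gaussianPDFReal 0 1)) hint)
      (Filter.Eventually.of_forall fun x => Finset.prod_nonneg fun i _ =>
        Set.indicator_nonneg (fun y _ => gaussianPDFReal_nonneg 0 1 y) _)]
  rw [integral_fintype_prod_eq_prod (f := fun (i : Fin k) => (s i).indicator (gaussianPDFReal 0 1))]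
  rw [ENNReal.ofReal_prod_of_nonneg (fun i _ => integral_nonneg
      (Set.indicator_nonneg (fun y _ => gaussianPDFReal_nonneg 0 1 y)))]
  refine Finset.prod_congr rfl fun i _ => ?_
  rw [gaussianReal_apply_eq_integral 0 one_ne_zero (s i),
    integral_indicator (hs i)]

section Lebesgue
variable {k : ℕ}

lemma integral_exp_neg_half_norm_sq :
    ∫ x : Fin k → ℝ, rexp (-(x ⬝ᵥ x) / 2) = (√(2 * π)) ^ k := by
  have h : ∀ x : Fin k → ℝ, rexp (-(x ⬝ᵥ x) / 2) = ∏ i, rexp (-(1/2) * (x i)^2) := by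
    intro x
    rw [← Real.exp_sum]
    congr 1
    rw [dotProduct, ← Finset.sum_neg_distrib, Finset.sum_div]
    exact Finset.sum_congr rfl fun i _ => by ring
  simp_rw [h]
  rw [volume_pi, MeasureTheory.integral_fintype_prod_eq_pow (ι := Fin k) (fun t : ℝ => rexp (-(1/2) * t^2)),
    integral_gaussian, Fintype.card_fin]
  norm_num [Real.sqrt_mul_self, mul_comm]

lemma integrable_exp_neg_half_norm_sq :
    Integrable (fun x : Fin k → ℝ => rexp (-(x ⬝ᵥ x) / 2)) := by
  have h : ∀ x : Fin k → ℝ, rexp (-(x ⬝ᵥ x) / 2) = ∏ i, rexp (-(1/2) * (x i)^2) := by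
    intro x
    rw [← Real.exp_sum]
    congr 1
    rw [dotProduct, ← Finset.sum_neg_distrib, Finset.sum_div]
    exact Finset.sum_congr rfl fun i _ => by ring
  simp_rw [h]
  exact Integrable.fintype_prod (f := fun (_ : Fin k) (t : ℝ) => rexp (-(1/2) * t^2))
    (fun i => integrable_exp_neg_mul_sq (by norm_num))

end Lebesgue

section Quad
open scoped MatrixOrder

lemma posdef_facts {k : ℕ} {A : Matrix (Fin k) (Fin k) ℝ} (hA : A.PosDef) :
    ∃ T : Matrix (Fin k) (Fin k) ℝ, T.det ≠ 0 ∧ |T.det| = A.det ^ (-(1/2) : ℝ) ∧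
      ∀ x : Fin k → ℝ, (T.mulVec x) ⬝ᵥ A.mulVec (T.mulVec x) = x ⬝ᵥ x := by
  classical
  set S := CFC.sqrt A with hS
  have hSS : S * S = A := CFC.sqrt_mul_sqrt_self A hA.posSemidef.nonneg
  have hSH : Sᵀ = S := by
    rw [← Matrix.conjTranspose_eq_transpose_of_trivial]
    exact (CFC.sqrt_nonneg A).posSemidef.isHermitian
  have hdetA : 0 < A.det := hA.det_pos
  have hdetS2 : S.det ^ 2 = A.det := by rw [pow_two, ← Matrix.det_mul, hSS]
  have hdetS : S.det ≠ 0 := by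
    intro h
    rw [h] at hdetS2
    simp at hdetS2
    exact absurd hdetS2.symm (ne_of_gt hdetA)
  refine ⟨S⁻¹, ?_, ?_, ?_⟩
  · rw [Matrix.det_nonsing_inv, Ring.inverse_eq_inv]
    exact inv_ne_zero hdetS
  · rw [Matrix.det_nonsing_inv, Ring.inverse_eq_inv, abs_inv, ← Real.sqrt_sq_eq_abs, hdetS2,
      Real.rpow_neg hdetA.le, Real.sqrt_eq_rpow]
  · intro x
    have hdetS' : IsUnit S.det := isUnit_iff_ne_zero.mpr hdetS
    have hTA : S⁻¹ * A * S⁻¹ = 1 := by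
      rw [← hSS, ← Matrix.mul_assoc, Matrix.mul_assoc (S⁻¹ * S), Matrix.nonsing_inv_mul S hdetS',
        Matrix.one_mul, Matrix.mul_nonsing_inv S hdetS']
    have hTH : (S⁻¹)ᵀ = S⁻¹ := by rw [Matrix.transpose_nonsing_inv, hSH]
    have hAT : Aᵀ = A := by
      rw [← Matrix.conjTranspose_eq_transpose_of_trivial]
      exact hA.1
    calc (S⁻¹ *ᵥ x) ⬝ᵥ A *ᵥ (S⁻¹ *ᵥ x)
        = (S⁻¹ *ᵥ x) ⬝ᵥ (A * S⁻¹) *ᵥ x := by rw [Matrix.mulVec_mulVec]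
      _ = ((A * S⁻¹)ᵀ *ᵥ (S⁻¹ *ᵥ x)) ⬝ᵥ x := by
          rw [Matrix.dotProduct_mulVec, Matrix.mulVec_transpose]
      _ = (((A * S⁻¹)ᵀ * S⁻¹) *ᵥ x) ⬝ᵥ x := by rw [Matrix.mulVec_mulVec]
      _ = x ⬝ᵥ x := by
          rw [Matrix.transpose_mul, hTH, hAT, Matrix.mul_assoc, ← Matrix.mul_assoc, hTA,
            Matrix.one_mulVec]

end Quad

section LebesgueQuad
variable {k : ℕ}

lemma continuous_exp_quad (A : Matrix (Fin k) (Fin k) ℝ) (b : Fin k → ℝ) :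
    Continuous fun x : Fin k → ℝ => rexp (-(x ⬝ᵥ A *ᵥ x) / 2 + b ⬝ᵥ x) := by
  simp only [dotProduct, mulVec]
  fun_prop

lemma integral_exp_quad {A : Matrix (Fin k) (Fin k) ℝ} (hA : A.PosDef) :
    ∫ x : Fin k → ℝ, rexp (-(x ⬝ᵥ A *ᵥ x) / 2) = (√(2 * π)) ^ k * A.det ^ (-(1/2) : ℝ) := by
  obtain ⟨T, hT0, hTdet, hTq⟩ := posdef_facts hA
  set h : (Fin k → ℝ) → ℝ := fun x => rexp (-(x ⬝ᵥ A *ᵥ x) / 2) with hh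
  have hcont : Continuous h := by
    have := continuous_exp_quad A (0 : Fin k → ℝ)
    simpa using this
  have hTcont : Continuous (Matrix.toLin' T) := LinearMap.continuous_on_pi _
  have hmap := Real.map_matrix_volume_pi_eq_smul_volume_pi hT0
  have key : ∫ x, h (Matrix.toLin' T x) ∂volume
      = ∫ x, h x ∂(Measure.map (Matrix.toLin' T) volume) :=
    (integral_map hTcont.measurable.aemeasurable hcont.aestronglyMeasurable).symm
  have lhs : ∫ x, h (Matrix.toLin' T x) ∂volume = (√(2 * π)) ^ k := by
    have : ∀ x : Fin k → ℝ, h (Matrix.toLin' T x) = rexp (-(x ⬝ᵥ x) / 2) := by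
      intro x
      rw [hh]
      simp only [Matrix.toLin'_apply]
      rw [hTq x]
    simp_rw [this]
    exact integral_exp_neg_half_norm_sq
  rw [hmap, integral_smul_measure, ENNReal.toReal_ofReal (by positivity)] at key
  rw [lhs, abs_inv] at key
  have hTd : |T.det| ≠ 0 := abs_ne_zero.mpr hT0
  have h2 : ∫ x, h x ∂volume = |T.det| * (√(2 * π)) ^ k := by
    rw [key, smul_eq_mul, ← mul_assoc, mul_inv_cancel₀ hTd, one_mul]
  rw [hh] at h2
  rw [h2, hTdet]
  ring

lemma integrable_exp_quad {A : Matrix (Fin k) (Fin k) ℝ} (hA : A.PosDef) :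
    Integrable (fun x : Fin k → ℝ => rexp (-(x ⬝ᵥ A *ᵥ x) / 2)) := by
  obtain ⟨T, hT0, hTdet, hTq⟩ := posdef_facts hA
  set h : (Fin k → ℝ) → ℝ := fun x => rexp (-(x ⬝ᵥ A *ᵥ x) / 2) with hh
  have hcont : Continuous h := by
    have := continuous_exp_quad A (0 : Fin k → ℝ)
    simpa using this
  have hTcont : Continuous (Matrix.toLin' T) := LinearMap.continuous_on_pi _
  have hmap := Real.map_matrix_volume_pi_eq_smul_volume_pi hT0
  have h1 : Integrable h (Measure.map (Matrix.toLin' T) volume) := by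
    rw [integrable_map_measure hcont.aestronglyMeasurable hTcont.measurable.aemeasurable]
    have : (h ∘ Matrix.toLin' T) = fun x : Fin k → ℝ => rexp (-(x ⬝ᵥ x) / 2) := by
      ext x
      simp only [Function.comp_apply, hh, Matrix.toLin'_apply]
      rw [hTq x]
    rw [this]
    exact integrable_exp_neg_half_norm_sq
  rw [hmap] at h1
  exact (integrable_smul_measure (ne_of_gt (ENNReal.ofReal_pos.mpr (by positivity)))
    ENNReal.ofReal_ne_top).mp h1

end LebesgueQuad

section LebesgueQuadLinear
variable {k : ℕ}

lemma exp_quad_shift {A : Matrix (Fin k) (Fin k) ℝ} (hA : A.PosDef) (hAT : Aᵀ = A)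
    (b : Fin k → ℝ) (y : Fin k → ℝ) :
    -((y + A⁻¹ *ᵥ b) ⬝ᵥ A *ᵥ (y + A⁻¹ *ᵥ b)) / 2 + b ⬝ᵥ (y + A⁻¹ *ᵥ b)
      = -(y ⬝ᵥ A *ᵥ y) / 2 + (b ⬝ᵥ A⁻¹ *ᵥ b) / 2 := by
  have hdet : IsUnit A.det := isUnit_iff_ne_zero.mpr (ne_of_gt hA.det_pos)
  have hAc : A *ᵥ (A⁻¹ *ᵥ b) = b := by
    rw [Matrix.mulVec_mulVec, Matrix.mul_nonsing_inv _ hdet, Matrix.one_mulVec]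
  have hcA : ∀ z : Fin k → ℝ, (A⁻¹ *ᵥ b) ⬝ᵥ A *ᵥ z = b ⬝ᵥ z := by
    intro z
    rw [Matrix.dotProduct_mulVec, ← Matrix.mulVec_transpose, hAT, hAc]
  rw [Matrix.mulVec_add, dotProduct_add, add_dotProduct, add_dotProduct, dotProduct_add,
    hcA, hcA, hAc, dotProduct_comm y b]
  ring

lemma integral_exp_quad_linear {A : Matrix (Fin k) (Fin k) ℝ} (hA : A.PosDef) (hAT : Aᵀ = A)
    (b : Fin k → ℝ) :
    ∫ x : Fin k → ℝ, rexp (-(x ⬝ᵥ A *ᵥ x) / 2 + b ⬝ᵥ x)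
      = (√(2 * π)) ^ k * A.det ^ (-(1/2) : ℝ) * rexp ((b ⬝ᵥ A⁻¹ *ᵥ b) / 2) := by
  rw [← integral_add_right_eq_self (μ := (volume : Measure (Fin k → ℝ)))
      (fun x => rexp (-(x ⬝ᵥ A *ᵥ x) / 2 + b ⬝ᵥ x)) (A⁻¹ *ᵥ b)]
  simp_rw [exp_quad_shift hA hAT b, Real.exp_add, integral_mul_const, integral_exp_quad hA]

lemma integrable_exp_quad_linear {A : Matrix (Fin k) (Fin k) ℝ} (hA : A.PosDef) (hAT : Aᵀ = A)
    (b : Fin k → ℝ) :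
    Integrable (fun x : Fin k → ℝ => rexp (-(x ⬝ᵥ A *ᵥ x) / 2 + b ⬝ᵥ x)) := by
  have h1 : Integrable (fun y : Fin k → ℝ =>
      rexp (-((y + A⁻¹ *ᵥ b) ⬝ᵥ A *ᵥ (y + A⁻¹ *ᵥ b)) / 2 + b ⬝ᵥ (y + A⁻¹ *ᵥ b))) := by
    simp_rw [exp_quad_shift hA hAT b, Real.exp_add]
    exact (integrable_exp_quad hA).mul_const _
  have h2 := h1.comp_add_right (-(A⁻¹ *ᵥ b))
  simpa using h2

end LebesgueQuadLinear

section GaussCore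
variable {k : ℕ}

lemma prod_gaussianPDFReal (x : Fin k → ℝ) :
    ∏ i, gaussianPDFReal 0 1 (x i) = ((√(2 * π))⁻¹) ^ k * rexp (-(x ⬝ᵥ x) / 2) := by
  have h : ∀ t : ℝ, gaussianPDFReal 0 1 t = (√(2 * π))⁻¹ * rexp (-(t * t) / 2) := by
    intro t
    rw [gaussianPDFReal]
    norm_num [pow_two]
  simp_rw [h]
  rw [Finset.prod_mul_distrib, Finset.prod_const, ← Real.exp_sum, Finset.card_univ,
    Fintype.card_fin]
  congr 1
  rw [dotProduct, ← Finset.sum_neg_distrib, Finset.sum_div]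

lemma measurable_prod_pdf :
    Measurable (fun x : Fin k → ℝ => (∏ i, gaussianPDFReal 0 1 (x i)).toNNReal) := by
  apply Measurable.real_toNNReal
  exact Finset.measurable_prod _ fun i _ =>
    (measurable_gaussianPDFReal 0 1).comp (measurable_pi_apply i)

lemma gauss_density_combine {M : Matrix (Fin k) (Fin k) ℝ} (b : Fin k → ℝ) (x : Fin k → ℝ) :
    (∏ i, gaussianPDFReal 0 1 (x i)) * rexp ((x ⬝ᵥ M *ᵥ x) / 2 + b ⬝ᵥ x)
      = ((√(2 * π))⁻¹) ^ k * rexp (-(x ⬝ᵥ (1 - M) *ᵥ x) / 2 + b ⬝ᵥ x) := by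
  rw [prod_gaussianPDFReal, mul_assoc, ← Real.exp_add]
  congr 2
  rw [Matrix.sub_mulVec, dotProduct_sub, Matrix.one_mulVec]
  ring

lemma integral_exp_quad_gaussian {M : Matrix (Fin k) (Fin k) ℝ} (hM : Mᵀ = M)
    (h1 : (1 - M).PosDef) (b : Fin k → ℝ) :
    ∫ x, rexp ((x ⬝ᵥ M *ᵥ x) / 2 + b ⬝ᵥ x) ∂(Measure.pi fun _ : Fin k => gaussianReal 0 1)
      = (1 - M).det ^ (-(1/2) : ℝ) * rexp ((b ⬝ᵥ (1 - M)⁻¹ *ᵥ b) / 2) := by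
  have hAT : (1 - M)ᵀ = 1 - M := by
    rw [Matrix.transpose_sub, Matrix.transpose_one, hM]
  rw [pi_gaussian_eq_withDensity]
  have hd : (fun x : Fin k → ℝ => ENNReal.ofReal (∏ i, gaussianPDFReal 0 1 (x i)))
      = fun x : Fin k → ℝ => ((∏ i, gaussianPDFReal 0 1 (x i)).toNNReal : ℝ≥0∞) := rfl
  rw [hd, integral_withDensity_eq_integral_smul measurable_prod_pdf]
  have hnn : ∀ x : Fin k → ℝ, (0:ℝ) ≤ ∏ i, gaussianPDFReal 0 1 (x i) :=
    fun x => Finset.prod_nonneg fun i _ => gaussianPDFReal_nonneg 0 1 (x i)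
  have heq : ∀ x : Fin k → ℝ,
      (∏ i, gaussianPDFReal 0 1 (x i)).toNNReal • rexp ((x ⬝ᵥ M *ᵥ x) / 2 + b ⬝ᵥ x)
        = ((√(2 * π))⁻¹) ^ k * rexp (-(x ⬝ᵥ (1 - M) *ᵥ x) / 2 + b ⬝ᵥ x) := by
    intro x
    rw [NNReal.smul_def, Real.coe_toNNReal _ (hnn x), smul_eq_mul, gauss_density_combine]
  simp_rw [heq]
  rw [integral_const_mul, integral_exp_quad_linear h1 hAT b]
  rw [← mul_assoc, ← mul_assoc, inv_pow, inv_mul_cancel₀ (by positivity), one_mul]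

lemma integrable_exp_quad_gaussian {M : Matrix (Fin k) (Fin k) ℝ} (hM : Mᵀ = M)
    (h1 : (1 - M).PosDef) (b : Fin k → ℝ) :
    Integrable (fun x => rexp ((x ⬝ᵥ M *ᵥ x) / 2 + b ⬝ᵥ x))
      (Measure.pi fun _ : Fin k => gaussianReal 0 1) := by
  have hAT : (1 - M)ᵀ = 1 - M := by
    rw [Matrix.transpose_sub, Matrix.transpose_one, hM]
  rw [pi_gaussian_eq_withDensity]
  have hd : (fun x : Fin k → ℝ => ENNReal.ofReal (∏ i, gaussianPDFReal 0 1 (x i)))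
      = fun x : Fin k → ℝ => ((∏ i, gaussianPDFReal 0 1 (x i)).toNNReal : ℝ≥0∞) := rfl
  rw [hd, integrable_withDensity_iff_integrable_smul measurable_prod_pdf]
  have hnn : ∀ x : Fin k → ℝ, (0:ℝ) ≤ ∏ i, gaussianPDFReal 0 1 (x i) :=
    fun x => Finset.prod_nonneg fun i _ => gaussianPDFReal_nonneg 0 1 (x i)
  have heq : (fun x : Fin k → ℝ =>
      (∏ i, gaussianPDFReal 0 1 (x i)).toNNReal • rexp ((x ⬝ᵥ M *ᵥ x) / 2 + b ⬝ᵥ x))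
        = fun x : Fin k → ℝ =>
          ((√(2 * π))⁻¹) ^ k * rexp (-(x ⬝ᵥ (1 - M) *ᵥ x) / 2 + b ⬝ᵥ x) := by
    ext x
    rw [NNReal.smul_def, Real.coe_toNNReal _ (hnn x), smul_eq_mul, gauss_density_combine]
  rw [heq]
  exact (integrable_exp_quad_linear h1 hAT b).const_mul _

end GaussCore

section Main

lemma dot_trans {ι κ : Type*} [Fintype ι] [Fintype κ] (M : Matrix ι κ ℝ) (v : κ → ℝ)
    (w : ι → ℝ) : v ⬝ᵥ Mᵀ *ᵥ w = (M *ᵥ v) ⬝ᵥ w := by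
  rw [Matrix.dotProduct_mulVec, Matrix.vecMul_transpose]

lemma resolvent_key {k : ℕ} {γ : ℝ} {U : Matrix (Fin k) (Fin k) ℝ}
    (hUwf : (1 - γ • U).PosDef) :
    U + γ • ((1 - γ • U)⁻¹ * (U * U)) = (1 - γ • U)⁻¹ * U := by
  have hdet : IsUnit (1 - γ • U).det := isUnit_iff_ne_zero.mpr (ne_of_gt hUwf.det_pos)
  have h2 : (1 - γ • U)⁻¹ * (1 - γ • U) = 1 := Matrix.nonsing_inv_mul _ hdet
  have hexp : (1 - γ • U) * U + γ • (U * U) = U := by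
    rw [Matrix.sub_mul, Matrix.one_mul, Matrix.smul_mul]
    abel
  calc U + γ • ((1 - γ • U)⁻¹ * (U * U))
      = (1 - γ • U)⁻¹ * ((1 - γ • U) * U + γ • (U * U)) := by
        rw [Matrix.mul_add, Matrix.mul_smul]
        congr 1
        rw [← Matrix.mul_assoc, h2, Matrix.one_mul]
    _ = (1 - γ • U)⁻¹ * U := by rw [hexp]

lemma resolvent_commute {k : ℕ} {γ : ℝ} {U : Matrix (Fin k) (Fin k) ℝ}
    (hUwf : (1 - γ • U).PosDef) :
    U * (1 - γ • U)⁻¹ = (1 - γ • U)⁻¹ * U := by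
  have hdet : IsUnit (1 - γ • U).det := isUnit_iff_ne_zero.mpr (ne_of_gt hUwf.det_pos)
  have h1 : (1 - γ • U) * (1 - γ • U)⁻¹ = 1 := Matrix.mul_nonsing_inv _ hdet
  have h2 : (1 - γ • U)⁻¹ * (1 - γ • U) = 1 := Matrix.nonsing_inv_mul _ hdet
  have hcomm0 : (1 - γ • U) * U = U * (1 - γ • U) := by
    rw [Matrix.sub_mul, Matrix.mul_sub, Matrix.one_mul, Matrix.mul_one, Matrix.smul_mul,
      Matrix.mul_smul]
  calc U * (1 - γ • U)⁻¹
      = ((1 - γ • U)⁻¹ * (1 - γ • U)) * (U * (1 - γ • U)⁻¹) := by rw [h2, Matrix.one_mul]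
    _ = (1 - γ • U)⁻¹ * (((1 - γ • U) * U) * (1 - γ • U)⁻¹) := by
        simp only [Matrix.mul_assoc]
    _ = (1 - γ • U)⁻¹ * (U * ((1 - γ • U) * (1 - γ • U)⁻¹)) := by
        rw [hcomm0, Matrix.mul_assoc]
    _ = (1 - γ • U)⁻¹ * U := by rw [h1, Matrix.mul_one]

end Main

/-- Block-matrix Gaussian identity (the paper's Lemma `LEM2:gap2`,
stated unconditionally): with `x = ν + w`, `w` and `η` independent standard Gaussians,
`E[exp((γ/2)(xᵀDx + 2ηᵀEx + ηᵀFη))]`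
`= det(I_n - γU)^{-1/2} det(I_m - γF)^{-1/2} exp((γ/2) νᵀ Ũ ν)`,
where `U = D + γEᵀ(I_m - γF)⁻¹E` and `Ũ = (I_n - γU)⁻¹U`. -/
theorem gaussian_block_exp_quadratic_moment {n m : ℕ} (γ : ℝ) (hγ : 0 < γ)
    (ν : Fin n → ℝ)
    (D : Matrix (Fin n) (Fin n) ℝ) (hD : D.IsSymm)
    (F : Matrix (Fin m) (Fin m) ℝ) (hF : F.IsSymm)
    (E : Matrix (Fin m) (Fin n) ℝ)
    (hFwf : (1 - γ • F).PosDef)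
    (U : Matrix (Fin n) (Fin n) ℝ)
    (hU : U = D + γ • (Eᵀ * (1 - γ • F)⁻¹ * E))
    (hUwf : (1 - γ • U).PosDef) :
    ∫ p : (Fin n → ℝ) × (Fin m → ℝ),
        Real.exp ((γ / 2) *
          ((ν + p.1) ⬝ᵥ D.mulVec (ν + p.1) +
            2 * (p.2 ⬝ᵥ E.mulVec (ν + p.1)) +
            p.2 ⬝ᵥ F.mulVec p.2))
        ∂((Measure.pi fun _ : Fin n => gaussianReal 0 1).prod
            (Measure.pi fun _ : Fin m => gaussianReal 0 1)) =
      ((1 - γ • U).det) ^ (-(1 / 2) : ℝ) * ((1 - γ • F).det) ^ (-(1 / 2) : ℝ) *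
        Real.exp ((γ / 2) * (ν ⬝ᵥ ((1 - γ • U)⁻¹ * U).mulVec ν)) := by
  classical
  have hFT : (γ • F)ᵀ = γ • F := by rw [Matrix.transpose_smul, hF]
  have h1FT : (1 - γ • F)ᵀ = 1 - γ • F := by
    rw [Matrix.transpose_sub, Matrix.transpose_one, hFT]
  have hGT : ((1 - γ • F)⁻¹)ᵀ = (1 - γ • F)⁻¹ := by
    rw [Matrix.transpose_nonsing_inv, h1FT]
  have hUT : Uᵀ = U := by
    rw [hU, Matrix.transpose_add, Matrix.transpose_smul, Matrix.transpose_mul,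
      Matrix.transpose_mul, Matrix.transpose_transpose, hGT, hD, Matrix.mul_assoc]
  have hγUT : (γ • U)ᵀ = γ • U := by rw [Matrix.transpose_smul, hUT]
  -- inner exponent combination
  have hinexp : ∀ x : Fin n → ℝ,
      (γ / 2) * ((ν + x) ⬝ᵥ D *ᵥ (ν + x)) +
        ((γ • (E *ᵥ (ν + x))) ⬝ᵥ (1 - γ • F)⁻¹ *ᵥ (γ • (E *ᵥ (ν + x)))) / 2
        = (γ / 2) * ((ν + x) ⬝ᵥ U *ᵥ (ν + x)) := by
    intro x
    set z := ν + x
    have h1 : U *ᵥ z = D *ᵥ z + γ • ((Eᵀ * (1 - γ • F)⁻¹ * E) *ᵥ z) := by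
      rw [hU, Matrix.add_mulVec, Matrix.smul_mulVec]
    have h2 : z ⬝ᵥ (Eᵀ * (1 - γ • F)⁻¹ * E) *ᵥ z
        = (E *ᵥ z) ⬝ᵥ (1 - γ • F)⁻¹ *ᵥ (E *ᵥ z) := by
      rw [Matrix.mul_assoc, ← Matrix.mulVec_mulVec, ← Matrix.mulVec_mulVec, dot_trans]
    simp only [h1, dotProduct_add, dotProduct_smul, smul_dotProduct, Matrix.mulVec_smul,
      smul_eq_mul, h2]
    ring
  -- outer exponent expansion
  have houtexp : ∀ x : Fin n → ℝ,
      (γ / 2) * ((ν + x) ⬝ᵥ U *ᵥ (ν + x))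
        = (γ / 2) * (ν ⬝ᵥ U *ᵥ ν) + ((x ⬝ᵥ (γ • U) *ᵥ x) / 2 + (γ • (U *ᵥ ν)) ⬝ᵥ x) := by
    intro x
    have hxUν : x ⬝ᵥ U *ᵥ ν = (U *ᵥ ν) ⬝ᵥ x := by
      nth_rewrite 1 [← hUT]
      rw [dot_trans, dotProduct_comm]
      nth_rewrite 1 [← hUT]
      rw [dot_trans]
    have hνUx : ν ⬝ᵥ U *ᵥ x = (U *ᵥ ν) ⬝ᵥ x := by
      nth_rewrite 1 [← hUT]
      rw [dot_trans]
    simp only [Matrix.mulVec_add, dotProduct_add, add_dotProduct, Matrix.smul_mulVec,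
      dotProduct_smul, smul_dotProduct, smul_eq_mul, hxUν, hνUx]
    ring
  -- final exponent identity
  have hfinexp : (γ / 2) * (ν ⬝ᵥ U *ᵥ ν) +
      ((γ • (U *ᵥ ν)) ⬝ᵥ (1 - γ • U)⁻¹ *ᵥ (γ • (U *ᵥ ν))) / 2
      = (γ / 2) * (ν ⬝ᵥ ((1 - γ • U)⁻¹ * U) *ᵥ ν) := by
    have h2 : (U *ᵥ ν) ⬝ᵥ (1 - γ • U)⁻¹ *ᵥ (U *ᵥ ν)
        = ν ⬝ᵥ ((1 - γ • U)⁻¹ * (U * U)) *ᵥ ν := by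
      have : (U *ᵥ ν) ⬝ᵥ (1 - γ • U)⁻¹ *ᵥ (U *ᵥ ν)
          = ν ⬝ᵥ Uᵀ *ᵥ ((1 - γ • U)⁻¹ *ᵥ (U *ᵥ ν)) := by rw [dot_trans]
      rw [this, hUT, Matrix.mulVec_mulVec, Matrix.mulVec_mulVec, ← Matrix.mul_assoc,
        resolvent_commute hUwf, Matrix.mul_assoc]
    rw [← resolvent_key hUwf]
    simp only [smul_dotProduct, Matrix.mulVec_smul, dotProduct_smul, h2, Matrix.add_mulVec,
      dotProduct_add, Matrix.smul_mulVec, smul_eq_mul]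
    ring
  -- inner integral
  have hin : ∀ x : Fin n → ℝ,
      ∫ η, Real.exp ((γ / 2) * ((ν + x) ⬝ᵥ D *ᵥ (ν + x) + 2 * (η ⬝ᵥ E *ᵥ (ν + x)) +
          η ⬝ᵥ F *ᵥ η)) ∂(Measure.pi fun _ : Fin m => gaussianReal 0 1)
        = ((1 - γ • F).det) ^ (-(1/2) : ℝ) *
          Real.exp ((γ / 2) * ((ν + x) ⬝ᵥ U *ᵥ (ν + x))) := by
    intro x
    have hsplit : ∀ η : Fin m → ℝ,
        (γ / 2) * ((ν + x) ⬝ᵥ D *ᵥ (ν + x) + 2 * (η ⬝ᵥ E *ᵥ (ν + x)) + η ⬝ᵥ F *ᵥ η)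
          = (γ / 2) * ((ν + x) ⬝ᵥ D *ᵥ (ν + x)) +
            ((η ⬝ᵥ (γ • F) *ᵥ η) / 2 + (γ • (E *ᵥ (ν + x))) ⬝ᵥ η) := by
      intro η
      simp only [Matrix.smul_mulVec, dotProduct_smul, smul_dotProduct, smul_eq_mul,
        dotProduct_comm (E *ᵥ (ν + x)) η]
      ring
    have hsplit' : ∀ η : Fin m → ℝ,
        Real.exp ((γ / 2) * ((ν + x) ⬝ᵥ D *ᵥ (ν + x) + 2 * (η ⬝ᵥ E *ᵥ (ν + x)) + η ⬝ᵥ F *ᵥ η))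
          = Real.exp ((γ / 2) * ((ν + x) ⬝ᵥ D *ᵥ (ν + x))) *
            Real.exp ((η ⬝ᵥ (γ • F) *ᵥ η) / 2 + (γ • (E *ᵥ (ν + x))) ⬝ᵥ η) := fun η => by
      rw [hsplit η, Real.exp_add]
    simp_rw [hsplit']
    rw [integral_const_mul, integral_exp_quad_gaussian hFT hFwf (γ • (E *ᵥ (ν + x))),
      mul_left_comm, ← Real.exp_add, hinexp x]
  -- continuity / measurability of the full integrand
  have hcont : Continuous fun p : (Fin n → ℝ) × (Fin m → ℝ) =>
      Real.exp ((γ / 2) * ((ν + p.1) ⬝ᵥ D *ᵥ (ν + p.1) +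
        2 * (p.2 ⬝ᵥ E *ᵥ (ν + p.1)) + p.2 ⬝ᵥ F *ᵥ p.2)) := by
    simp only [dotProduct, mulVec]
    fun_prop
  -- integrability of inner slices
  have hslice : ∀ x : Fin n → ℝ, Integrable (fun η : Fin m → ℝ =>
      Real.exp ((γ / 2) * ((ν + x) ⬝ᵥ D *ᵥ (ν + x) + 2 * (η ⬝ᵥ E *ᵥ (ν + x)) +
        η ⬝ᵥ F *ᵥ η))) (Measure.pi fun _ : Fin m => gaussianReal 0 1) := by
    intro x
    have hsplit : ∀ η : Fin m → ℝ,
        (γ / 2) * ((ν + x) ⬝ᵥ D *ᵥ (ν + x) + 2 * (η ⬝ᵥ E *ᵥ (ν + x)) + η ⬝ᵥ F *ᵥ η)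
          = (γ / 2) * ((ν + x) ⬝ᵥ D *ᵥ (ν + x)) +
            ((η ⬝ᵥ (γ • F) *ᵥ η) / 2 + (γ • (E *ᵥ (ν + x))) ⬝ᵥ η) := by
      intro η
      simp only [Matrix.smul_mulVec, dotProduct_smul, smul_dotProduct, smul_eq_mul,
        dotProduct_comm (E *ᵥ (ν + x)) η]
      ring
    have h2 := (integrable_exp_quad_gaussian hFT hFwf (γ • (E *ᵥ (ν + x)))).const_mul
      (Real.exp ((γ / 2) * ((ν + x) ⬝ᵥ D *ᵥ (ν + x))))
    apply h2.congr
    refine Filter.Eventually.of_forall fun η => ?_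
    simp only
    rw [← Real.exp_add, ← hsplit η]
  -- outer integrand integrability
  have houtint : Integrable (fun x : Fin n → ℝ =>
      Real.exp ((γ / 2) * ((ν + x) ⬝ᵥ U *ᵥ (ν + x))))
      (Measure.pi fun _ : Fin n => gaussianReal 0 1) := by
    have h1 := (integrable_exp_quad_gaussian hγUT hUwf (γ • (U *ᵥ ν))).const_mul
      (Real.exp ((γ / 2) * (ν ⬝ᵥ U *ᵥ ν)))
    apply h1.congr
    refine Filter.Eventually.of_forall fun x => ?_
    simp only
    rw [← Real.exp_add, ← houtexp x]
  -- joint integrability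
  have hint : Integrable (fun p : (Fin n → ℝ) × (Fin m → ℝ) =>
      Real.exp ((γ / 2) * ((ν + p.1) ⬝ᵥ D *ᵥ (ν + p.1) +
        2 * (p.2 ⬝ᵥ E *ᵥ (ν + p.1)) + p.2 ⬝ᵥ F *ᵥ p.2)))
      (((Measure.pi fun _ : Fin n => gaussianReal 0 1)).prod
        (Measure.pi fun _ : Fin m => gaussianReal 0 1)) := by
    rw [integrable_prod_iff hcont.aestronglyMeasurable]
    constructor
    · exact Filter.Eventually.of_forall fun x => hslice x
    · have : (fun x : Fin n → ℝ => ∫ η, ‖Real.exp ((γ / 2) * ((ν + x) ⬝ᵥ D *ᵥ (ν + x) +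
          2 * (η ⬝ᵥ E *ᵥ (ν + x)) + η ⬝ᵥ F *ᵥ η))‖
          ∂(Measure.pi fun _ : Fin m => gaussianReal 0 1))
          = fun x : Fin n → ℝ => ((1 - γ • F).det) ^ (-(1/2) : ℝ) *
            Real.exp ((γ / 2) * ((ν + x) ⬝ᵥ U *ᵥ (ν + x))) := by
        ext x
        simp_rw [Real.norm_eq_abs, Real.abs_exp]
        exact hin x
      rw [this]
      exact houtint.const_mul _
  have hexp1 : ∀ x : Fin n → ℝ,
      Real.exp ((γ / 2) * ((ν + x) ⬝ᵥ U *ᵥ (ν + x)))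
        = Real.exp ((γ / 2) * (ν ⬝ᵥ U *ᵥ ν)) *
          Real.exp ((x ⬝ᵥ (γ • U) *ᵥ x) / 2 + (γ • (U *ᵥ ν)) ⬝ᵥ x) := fun x => by
    rw [houtexp x, Real.exp_add]
  rw [MeasureTheory.integral_prod _ hint]
  simp_rw [hin]
  rw [integral_const_mul]
  simp_rw [hexp1]
  rw [integral_const_mul, integral_exp_quad_gaussian hγUT hUwf (γ • (U *ᵥ ν)),
    mul_left_comm (Real.exp _), ← Real.exp_add, hfinexp]
  ring
end
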